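/- arXiv:0908.1509 — 5 statements merged into one kernel-verified Lean document; each statement's English description precedes it below -/
import Mathlib

section
/- For every m > 0 and every r > 0, (α / (2 Γ(1 − α/2))) ∫_0^∞ (4πu)^{−d/2} e^{−r²/(4u)} e^{−m^{2/α} u} u^{−1−α/2} du = A(d,−α) · r^{−d−α} · ψ(m^{1/α} r). In other words, the Lévy density of the relativistic α-stable process with weight m, evaluated at a point at distance r from the origin, equals A(d,−α) r^{−d−α} ψ(m^{1/α} r). -/
open MeasureTheory Real Set

/-- `ψ(r) = 2^{-(d+α)} Γ((d+α)/2)^{-1} ∫_0^∞ s^{(d+α)/2-1} e^{-s/4 - r²/s} ds`. -/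
noncomputable def psi (d : ℕ) (α r : ℝ) : ℝ :=
  2 ^ (-((d : ℝ) + α)) * (Real.Gamma (((d : ℝ) + α) / 2))⁻¹ *
    ∫ s in Set.Ioi (0 : ℝ), s ^ (((d : ℝ) + α) / 2 - 1) * Real.exp (-(s / 4) - r ^ 2 / s)

/-- `A(d, -α) = α 2^{α-1} π^{-d/2} Γ((d+α)/2) Γ(1-α/2)^{-1}`. -/
noncomputable def Aconst (d : ℕ) (α : ℝ) : ℝ :=
  α * 2 ^ (α - 1) * Real.pi ^ (-(d : ℝ) / 2) * Real.Gamma (((d : ℝ) + α) / 2) /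
    Real.Gamma (1 - α / 2)

/-- `j^m(r) = A(d,-α) r^{-d-α} ψ(m^{1/α} r)`, the Lévy density of the relativistic
α-stable process with weight `m`. -/
noncomputable def jm (d : ℕ) (α m r : ℝ) : ℝ :=
  Aconst d α * r ^ (-(d : ℝ) - α) * psi d α (m ^ (1 / α) * r)

/-- `p^m(t,x) = (2π)^{-d} ∫_{ℝ^d} e^{-i x·ξ} exp(-t((|ξ|² + m^{2/α})^{α/2} - m)) dξ`,
the transition density of the relativistic α-stable process with weight `m`. -/
noncomputable def relDensity (d : ℕ) (α m t : ℝ) (x : EuclideanSpace ℝ (Fin d)) : ℝ :=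
  (2 * Real.pi) ^ (-(d : ℝ)) *
    (∫ ξ : EuclideanSpace ℝ (Fin d),
      Complex.exp (-(Complex.I * ((inner ℝ x ξ : ℝ) : ℂ)) -
        ((t * ((‖ξ‖ ^ 2 + m ^ (2 / α)) ^ (α / 2) - m) : ℝ) : ℂ))).re

/-- The Lévy density of the relativistic α-stable process with weight `m`, evaluated at
distance `r` from the origin, equals `A(d,-α) r^{-d-α} ψ(m^{1/α} r)`. -/
theorem levyDensity_eq (d : ℕ) (hd : 1 ≤ d) (α : ℝ) (hα : α ∈ Set.Ioo (0:ℝ) 2)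
    (m : ℝ) (hm : 0 < m) (r : ℝ) (hr : 0 < r) :
    (α / (2 * Real.Gamma (1 - α / 2))) *
      ∫ u in Set.Ioi (0 : ℝ),
        (4 * Real.pi * u) ^ (-(d : ℝ) / 2) * Real.exp (-(r ^ 2 / (4 * u))) *
          Real.exp (-(m ^ (2 / α)) * u) * u ^ (-1 - α / 2)
    = Aconst d α * r ^ (-(d : ℝ) - α) * psi d α (m ^ (1 / α) * r) := by
  unfold Aconst psi
  obtain ⟨hα0, hα2⟩ := hα
  set ρ : ℝ := m ^ (1 / α) * r with hρ
  set f : ℝ → ℝ := fun s => s ^ (((d : ℝ) + α) / 2 - 1) * Real.exp (-(s / 4) - ρ ^ 2 / s) with hf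
  have hr2 : (0:ℝ) < r ^ 2 := by positivity
  have h1 : (∫ x in Ioi (0:ℝ), (|(-1:ℝ)| * x ^ ((-1:ℝ) - 1)) • f (r ^ 2 * x ^ (-1:ℝ)))
      = ∫ y in Ioi (0:ℝ), f (r ^ 2 * y) :=
    integral_comp_rpow_Ioi (fun y => f (r ^ 2 * y)) (by norm_num)
  have h2 : (∫ y in Ioi (0:ℝ), f (r ^ 2 * y)) = (r ^ 2)⁻¹ • ∫ s in Ioi (0:ℝ), f s := by
    simpa using integral_comp_mul_left_Ioi f 0 hr2
  have hρ2 : ρ ^ 2 = m ^ (2 / α) * r ^ 2 := by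
    rw [hρ, mul_pow, ← Real.rpow_natCast (m ^ (1/α)) 2, ← Real.rpow_mul hm.le]
    norm_num
    left; congr 1; ring
  have key : ∀ x ∈ Ioi (0:ℝ),
      (4 * Real.pi * x) ^ (-(d : ℝ) / 2) * Real.exp (-(r ^ 2 / (4 * x))) *
          Real.exp (-(m ^ (2 / α)) * x) * x ^ (-1 - α / 2)
      = ((4 * Real.pi) ^ (-(d:ℝ)/2) * r ^ (-(d:ℝ) - α) * r ^ 2) *
          ((|(-1:ℝ)| * x ^ ((-1:ℝ) - 1)) • f (r ^ 2 * x ^ (-1:ℝ))) := by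
    intro x hx
    rw [mem_Ioi] at hx
    have h4π : (0:ℝ) ≤ 4 * Real.pi := by positivity
    have e1 : r ^ 2 * x ^ (-1:ℝ) = r ^ 2 / x := by
      rw [Real.rpow_neg_one]; ring
    rw [e1, hf]
    simp only [smul_eq_mul, abs_neg, abs_one]
    have harg : -(r ^ 2 / x / 4) - ρ ^ 2 / (r ^ 2 / x)
        = -(r ^ 2 / (4 * x)) + -(m ^ (2/α)) * x := by
      rw [hρ2]; field_simp; ring
    have hrpow : (r ^ 2 / x) ^ (((d : ℝ) + α) / 2 - 1)
        = (r ^ 2) ^ (((d : ℝ) + α) / 2 - 1) * x ^ (-((((d : ℝ) + α) / 2 - 1))) := by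
      rw [div_eq_mul_inv, Real.mul_rpow hr2.le (inv_nonneg.mpr hx.le),
        Real.inv_rpow hx.le, ← Real.rpow_neg hx.le]
    rw [harg, hrpow, Real.exp_add, Real.mul_rpow h4π hx.le]
    have hrside : r ^ (-(d:ℝ) - α) * r ^ 2 * (r ^ 2) ^ (((d : ℝ) + α) / 2 - 1) = 1 := by
      rw [← Real.rpow_natCast r 2, ← Real.rpow_mul hr.le, ← Real.rpow_add hr,
        ← Real.rpow_add hr]
      push_cast
      rw [show -(d:ℝ) - α + 2 + 2 * (((d:ℝ) + α)/2 - 1) = 0 by ring, Real.rpow_zero]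
    have hxside : x ^ (-(d:ℝ)/2) * x ^ (-1 - α/2)
        = x ^ ((-1:ℝ) - 1) * x ^ (-((((d : ℝ) + α) / 2 - 1))) := by
      rw [← Real.rpow_add hx, ← Real.rpow_add hx]
      congr 1; ring
    calc (4 * Real.pi) ^ (-(d:ℝ)/2) * x ^ (-(d:ℝ)/2) * Real.exp (-(r ^ 2 / (4 * x))) *
          Real.exp (-(m ^ (2/α)) * x) * x ^ (-1 - α/2)
        = (4 * Real.pi) ^ (-(d:ℝ)/2) *
            (r ^ (-(d:ℝ) - α) * r ^ 2 * (r ^ 2) ^ (((d : ℝ) + α) / 2 - 1)) *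
            (x ^ (-(d:ℝ)/2) * x ^ (-1 - α/2)) *
            (Real.exp (-(r ^ 2 / (4 * x))) * Real.exp (-(m ^ (2/α)) * x)) := by
          rw [hrside]; ring
      _ = _ := by rw [hxside]; ring
  have h3 : (∫ u in Ioi (0:ℝ),
        (4 * Real.pi * u) ^ (-(d : ℝ) / 2) * Real.exp (-(r ^ 2 / (4 * u))) *
          Real.exp (-(m ^ (2 / α)) * u) * u ^ (-1 - α / 2))
      = ((4 * Real.pi) ^ (-(d:ℝ)/2) * r ^ (-(d:ℝ) - α) * r ^ 2) *
          ∫ x in Ioi (0:ℝ), (|(-1:ℝ)| * x ^ ((-1:ℝ) - 1)) • f (r ^ 2 * x ^ (-1:ℝ)) := by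
    rw [← integral_const_mul]
    exact setIntegral_congr_fun measurableSet_Ioi key
  rw [h3, h1, h2, smul_eq_mul]
  have hΓ2 : Real.Gamma (((d:ℝ) + α) / 2) ≠ 0 := by
    have h1d : (1:ℝ) ≤ (d:ℝ) := by exact_mod_cast hd
    exact (Real.Gamma_pos_of_pos (by linarith)).ne'
  have hΓ1 : Real.Gamma (1 - α / 2) ≠ 0 := (Real.Gamma_pos_of_pos (by linarith)).ne'
  have h4 : (4 * Real.pi) ^ (-(d:ℝ)/2) = 2 ^ (-(d:ℝ)) * Real.pi ^ (-(d:ℝ)/2) := by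
    rw [Real.mul_rpow (by norm_num) Real.pi_pos.le]
    congr 1
    rw [show (4:ℝ) = 2 ^ (2:ℝ) by norm_num, ← Real.rpow_mul (by norm_num)]
    congr 1; ring
  have h5 : (2:ℝ) ^ (α - 1) * 2 ^ (-((d:ℝ) + α)) * 2 = 2 ^ (-(d:ℝ)) := by
    rw [← Real.rpow_add two_pos, ← Real.rpow_add_one (two_ne_zero)]
    congr 1; ring
  rw [h4]
  set Γ1 := Real.Gamma (1 - α / 2)
  set Γ2 := Real.Gamma (((d:ℝ) + α) / 2)
  set I := ∫ s in Ioi (0:ℝ), f s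
  set P := Real.pi ^ (-(d:ℝ)/2)
  set R := r ^ (-(d:ℝ) - α)
  set B1 := (2:ℝ) ^ (α - 1)
  set B2 := (2:ℝ) ^ (-((d:ℝ) + α))
  set T := (2:ℝ) ^ (-(d:ℝ))
  field_simp
  linear_combination (-(P * R * I)) * h5
end

section
/- There exists a constant c > 1 depending only on d and α such that for all r ∈ [1, ∞), c^{-1} e^{−r} r^{(d+α−1)/2} ≤ ψ(r) ≤ c e^{−r} r^{(d+α−1)/2}. -/
open MeasureTheory Real Set

lemma aux_exp_id (r s : ℝ) (hs : 0 < s) :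
    -(s/4) - r^2/s = -r - (s - 2*r)^2/(4*s) := by
  field_simp
  ring

lemma aux_meas (ν r : ℝ) :
    Measurable (fun s : ℝ => s ^ (ν - 1) * Real.exp (-(s/4) - r^2/s)) := by
  fun_prop

lemma aux_integrable {ν : ℝ} (hν : 0 < ν) (r : ℝ) :
    IntegrableOn (fun s : ℝ => s ^ (ν - 1) * Real.exp (-(s/4) - r^2/s)) (Ioi 0) := by
  have hg : IntegrableOn (fun s : ℝ => s ^ (ν - 1) * Real.exp (-(4⁻¹ : ℝ) * s ^ (1:ℝ))) (Ioi 0) :=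
    integrableOn_rpow_mul_exp_neg_mul_rpow (by linarith) zero_lt_one (by norm_num)
  refine hg.mono' ((aux_meas ν r).aestronglyMeasurable) ?_
  rw [ae_restrict_iff' measurableSet_Ioi]
  refine ae_of_all _ fun s hs => ?_
  have hs0 : 0 < s := hs
  rw [Real.norm_eq_abs, abs_of_nonneg (by positivity)]
  refine mul_le_mul_of_nonneg_left ?_ (Real.rpow_nonneg hs0.le _)
  rw [Real.exp_le_exp, Real.rpow_one]
  have : 0 ≤ r^2/s := by positivity
  linarith

lemma aux_lower {ν : ℝ} (hν : 1/2 < ν) (r : ℝ) (hr : 1 ≤ r) :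
    Real.exp (-(1/8:ℝ)) / 3 * (Real.exp (-r) * r ^ (ν - 1/2)) ≤
    ∫ s in Ioi (0:ℝ), s ^ (ν - 1) * Real.exp (-(s/4) - r^2/s) := by
  have hν0 : 0 < ν := by linarith
  have hr0 : (0:ℝ) < r := by linarith
  have hsq : Real.sqrt r ≤ r := by
    nlinarith [Real.sq_sqrt hr0.le, Real.sqrt_nonneg r, Real.sqrt_le_sqrt hr,
      Real.sqrt_one]
  have hsq0 : 0 < Real.sqrt r := Real.sqrt_pos.2 hr0
  set a := 2*r with ha
  set b := 2*r + Real.sqrt r with hb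
  have hab : a < b := by simp [ha, hb]; positivity
  have hsub : Ioc a b ⊆ Ioi (0:ℝ) := fun s hs => lt_trans (by positivity) hs.1
  set K := Real.exp (-(1/8:ℝ)) / 3 * (Real.exp (-r) * r ^ (ν - 1)) with hK
  have hKpos : 0 < K := by positivity
  -- pointwise lower bound on Ioc a b
  have hpt : ∀ s ∈ Ioc a b, K ≤ s ^ (ν - 1) * Real.exp (-(s/4) - r^2/s) := by
    intro s hs
    have hs1 : 2*r < s := hs.1
    have hs2 : s ≤ 2*r + Real.sqrt r := hs.2
    have hs0 : 0 < s := by nlinarith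
    have hs3 : s ≤ 3*r := by linarith
    -- base bound
    have hbase : r ^ (ν - 1) / 3 ≤ s ^ (ν - 1) := by
      rcases le_or_gt 1 ν with h1 | h1
      · have : r ^ (ν-1) ≤ s ^ (ν-1) :=
          Real.rpow_le_rpow hr0.le (by linarith) (by linarith)
        have hp : 0 < r ^ (ν-1) := Real.rpow_pos_of_pos hr0 _
        linarith
      · have h3 : s ^ (ν-1) ≥ (3*r) ^ (ν-1) :=
          Real.rpow_le_rpow_of_nonpos hs0 hs3 (by linarith)
        have h4 : (3*r) ^ (ν-1) = 3 ^ (ν-1) * r ^ (ν-1) :=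
          Real.mul_rpow (by norm_num) hr0.le
        have h5 : (3:ℝ) ^ (-1:ℝ) ≤ 3 ^ (ν-1) :=
          Real.rpow_le_rpow_of_exponent_le (by norm_num) (by linarith)
        have h6 : (3:ℝ) ^ (-1:ℝ) = 1/3 := by
          rw [Real.rpow_neg_one]; norm_num
        have hp : 0 < r ^ (ν-1) := Real.rpow_pos_of_pos hr0 _
        have h7 := mul_le_mul_of_nonneg_right h5 hp.le
        rw [h6] at h7
        linarith
    -- exponential bound
    have hexp : Real.exp (-r) * Real.exp (-(1/8:ℝ)) ≤ Real.exp (-(s/4) - r^2/s) := by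
      rw [aux_exp_id r s hs0, ← Real.exp_add]
      rw [Real.exp_le_exp]
      have h7 : (s - 2*r)^2 ≤ r := by
        nlinarith [Real.sq_sqrt hr0.le]
      have h8 : (s - 2*r)^2/(4*s) ≤ 1/8 := by
        rw [div_le_div_iff₀ (by positivity) (by norm_num)]
        nlinarith
      linarith
    calc K = r ^ (ν-1)/3 * (Real.exp (-r) * Real.exp (-(1/8:ℝ))) := by
            rw [hK]; ring
      _ ≤ s ^ (ν-1) * (Real.exp (-r) * Real.exp (-(1/8:ℝ))) := by
            apply mul_le_mul_of_nonneg_right hbase (by positivity)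
      _ ≤ s ^ (ν-1) * Real.exp (-(s/4) - r^2/s) := by
            apply mul_le_mul_of_nonneg_left hexp (Real.rpow_nonneg hs0.le _)
  have hint : IntegrableOn (fun s : ℝ => s ^ (ν - 1) * Real.exp (-(s/4) - r^2/s)) (Ioc a b) :=
    (aux_integrable hν0 r).mono_set hsub
  have step1 : ∫ s in Ioc a b, K ≤ ∫ s in Ioc a b, s ^ (ν - 1) * Real.exp (-(s/4) - r^2/s) := by
    refine setIntegral_mono_on (integrableOn_const measure_Ioc_lt_top.ne) hint
      measurableSet_Ioc hpt
  have step2 : (∫ (_ : ℝ) in Ioc a b, K) = Real.sqrt r * K := by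
    rw [setIntegral_const, Real.volume_real_Ioc_of_le hab.le, smul_eq_mul]
    congr 1
    rw [show b - a = Real.sqrt r by rw [hb, ha]; ring]
  have step3 : ∫ s in Ioc a b, s ^ (ν - 1) * Real.exp (-(s/4) - r^2/s) ≤
      ∫ s in Ioi (0:ℝ), s ^ (ν - 1) * Real.exp (-(s/4) - r^2/s) := by
    refine setIntegral_mono_set (aux_integrable hν0 r) ?_ (HasSubset.Subset.eventuallyLE hsub)
    filter_upwards [ae_restrict_mem measurableSet_Ioi] with s hs
    have : (0:ℝ) < s := hs
    dsimp
    positivity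
  have key : Real.sqrt r * K ≤ ∫ s in Ioi (0:ℝ), s ^ (ν - 1) * Real.exp (-(s/4) - r^2/s) := by
    rw [← step2]; exact le_trans step1 step3
  refine le_trans (le_of_eq ?_) key
  rw [hK]
  have : Real.sqrt r * r ^ (ν - 1) = r ^ (ν - 1/2) := by
    rw [Real.sqrt_eq_rpow, ← Real.rpow_add hr0]
    congr 1; ring
  calc Real.exp (-(1/8:ℝ)) / 3 * (Real.exp (-r) * r ^ (ν - 1/2))
      = Real.exp (-(1/8:ℝ)) / 3 * (Real.exp (-r) * (Real.sqrt r * r ^ (ν - 1))) := by rw [this]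
    _ = Real.sqrt r * (Real.exp (-(1/8:ℝ)) / 3 * (Real.exp (-r) * r ^ (ν - 1))) := by ring

lemma aux_upper {ν : ℝ} (hν : 1/2 < ν) :
    ∃ C : ℝ, 0 < C ∧ ∀ r : ℝ, 1 ≤ r →
      (∫ s in Ioi (0:ℝ), s ^ (ν - 1) * Real.exp (-(s/4) - r^2/s)) ≤
      C * (Real.exp (-r) * r ^ (ν - 1/2)) := by
  have hν0 : 0 < ν := by linarith
  set Cν := ∫ s in Ioi (0:ℝ), s ^ (ν-1) * Real.exp (-(16⁻¹:ℝ) * s ^ (1:ℝ)) with hCν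
  have hCνint : IntegrableOn (fun s : ℝ => s ^ (ν-1) * Real.exp (-(16⁻¹:ℝ) * s ^ (1:ℝ)))
      (Ioi 0) := integrableOn_rpow_mul_exp_neg_mul_rpow (by linarith) zero_lt_one (by norm_num)
  have hCν0 : 0 ≤ Cν := by
    refine setIntegral_nonneg measurableSet_Ioi fun s hs => ?_
    have : (0:ℝ) < s := hs
    positivity
  refine ⟨4/ν + 4^(ν:ℝ) * Real.sqrt (16*π) + Cν, by positivity, fun r hr => ?_⟩
  have hr0 : (0:ℝ) < r := by linarith
  set f := fun s : ℝ => s ^ (ν - 1) * Real.exp (-(s/4) - r^2/s) with hf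
  have hfi : IntegrableOn f (Ioi 0) := aux_integrable hν0 r
  have hfnn : ∀ s ∈ Ioi (0:ℝ), 0 ≤ f s := by
    intro s hs; have : (0:ℝ) < s := hs; rw [hf]; positivity
  -- splitting
  have hsub1 : Ioc (0:ℝ) r ⊆ Ioi 0 := Ioc_subset_Ioi_self
  have hsub2 : Ioc r (4*r) ⊆ Ioi (0:ℝ) := fun s hs => lt_trans hr0 hs.1
  have hsub3 : Ioi (4*r) ⊆ Ioi (0:ℝ) := Ioi_subset_Ioi (by linarith)
  have hsplit : (∫ s in Ioi (0:ℝ), f s) =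
      (∫ s in Ioc (0:ℝ) r, f s) + (∫ s in Ioc r (4*r), f s) + (∫ s in Ioi (4*r), f s) := by
    rw [← setIntegral_union (Ioc_disjoint_Ioc_of_le le_rfl) measurableSet_Ioc
        (hfi.mono_set hsub1) (hfi.mono_set hsub2),
      Ioc_union_Ioc_eq_Ioc hr0.le (by linarith),
      ← setIntegral_union (Ioc_disjoint_Ioi_same) measurableSet_Ioi
        (hfi.mono_set (Ioc_subset_Ioi_self.trans ?_)) (hfi.mono_set hsub3),
      Ioc_union_Ioi_eq_Ioi (by linarith : (0:ℝ) ≤ 4*r)]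
    · exact subset_rfl
  -- Piece 1 : (0, r]
  have hrpow_int : IntegrableOn (fun s : ℝ => s ^ (ν-1)) (Ioc 0 r) :=
    (intervalIntegrable_iff_integrableOn_Ioc_of_le hr0.le).1
      (intervalIntegral.intervalIntegrable_rpow' (by linarith))
  have T1 : (∫ s in Ioc (0:ℝ) r, f s) ≤ 4/ν * (Real.exp (-r) * r ^ (ν - 1/2)) := by
    have hpt : ∀ s ∈ Ioc (0:ℝ) r, f s ≤ s ^ (ν-1) * (Real.exp (-r) * Real.exp (-(r/4))) := by
      intro s hs
      have hs0 : 0 < s := hs.1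
      have hsr : s ≤ r := hs.2
      rw [hf]
      refine mul_le_mul_of_nonneg_left ?_ (Real.rpow_nonneg hs0.le _)
      rw [aux_exp_id r s hs0, ← Real.exp_add, Real.exp_le_exp]
      have hq : r/4 ≤ (s - 2*r)^2/(4*s) := by
        rw [div_le_div_iff₀ (by norm_num) (by positivity)]
        nlinarith [mul_nonneg (by linarith : (0:ℝ) ≤ r - s) (by linarith : (0:ℝ) ≤ 4*r - s)]
      linarith
    have step : (∫ s in Ioc (0:ℝ) r, f s) ≤
        ∫ s in Ioc (0:ℝ) r, s ^ (ν-1) * (Real.exp (-r) * Real.exp (-(r/4))) :=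
      setIntegral_mono_on (hfi.mono_set hsub1) (hrpow_int.mul_const _) measurableSet_Ioc hpt
    have heval : (∫ s in Ioc (0:ℝ) r, s ^ (ν-1) * (Real.exp (-r) * Real.exp (-(r/4))))
        = r ^ ν / ν * (Real.exp (-r) * Real.exp (-(r/4))) := by
      rw [integral_mul_const]
      congr 1
      rw [← intervalIntegral.integral_of_le hr0.le,
        integral_rpow (Or.inl (by linarith : (-1:ℝ) < ν - 1))]
      rw [Real.zero_rpow (by linarith : ν - 1 + 1 ≠ 0)]
      rw [show ν - 1 + 1 = ν by ring]
      ring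
    have hbound : r ^ ν / ν * (Real.exp (-r) * Real.exp (-(r/4)))
        ≤ 4/ν * (Real.exp (-r) * r ^ (ν - 1/2)) := by
      have hsplitν : r ^ ν = r ^ ((1:ℝ)/2) * r ^ (ν - 1/2) := by
        rw [← Real.rpow_add hr0]; congr 1; ring
      have h12 : r ^ ((1:ℝ)/2) ≤ r := by
        calc r ^ ((1:ℝ)/2) ≤ r ^ (1:ℝ) :=
              Real.rpow_le_rpow_of_exponent_le hr (by norm_num)
          _ = r := Real.rpow_one r
      have e1 : Real.exp (-(r/4)) * r ≤ 4 := by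
        have h := Real.add_one_le_exp (r/4)
        have h2 : Real.exp (-(r/4)) * Real.exp (r/4) = 1 := by
          rw [← Real.exp_add]; norm_num
        nlinarith [mul_le_mul_of_nonneg_left h (Real.exp_pos (-(r/4))).le,
          (Real.exp_pos (-(r/4))).le]
      have e2 : Real.exp (-(r/4)) * r ^ ((1:ℝ)/2) ≤ 4 := by
        refine le_trans ?_ e1
        exact mul_le_mul_of_nonneg_left h12 (Real.exp_pos _).le
      have hrp : 0 ≤ r ^ (ν - 1/2) := Real.rpow_nonneg hr0.le _
      have hrexp : 0 ≤ Real.exp (-r) := (Real.exp_pos _).le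
      calc r ^ ν / ν * (Real.exp (-r) * Real.exp (-(r/4)))
          = (Real.exp (-(r/4)) * r ^ ((1:ℝ)/2)) * (Real.exp (-r) * r ^ (ν - 1/2)) / ν := by
            rw [hsplitν]; ring
        _ ≤ 4 * (Real.exp (-r) * r ^ (ν - 1/2)) / ν := by
            gcongr
        _ = 4/ν * (Real.exp (-r) * r ^ (ν - 1/2)) := by ring
    linarith [le_trans step (le_of_eq heval)]
  -- Piece 2 : (r, 4r]
  have hb2 : (0:ℝ) < (16*r)⁻¹ := by positivity
  have hg2 : Integrable (fun s : ℝ => Real.exp (-(16*r)⁻¹ * (s - 2*r)^2)) :=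
    (integrable_exp_neg_mul_sq hb2).comp_sub_right (2*r)
  have hg2val : (∫ s : ℝ, Real.exp (-(16*r)⁻¹ * (s - 2*r)^2)) = Real.sqrt (16*π) * r ^ ((1:ℝ)/2) := by
    rw [integral_sub_right_eq_self (fun u : ℝ => Real.exp (-(16*r)⁻¹ * u^2)) (2*r),
      integral_gaussian]
    rw [show π / (16*r)⁻¹ = (16*π) * r by field_simp,
      Real.sqrt_mul (by positivity) r, Real.sqrt_eq_rpow r]
  have T2 : (∫ s in Ioc r (4*r), f s) ≤
      4^(ν:ℝ) * Real.sqrt (16*π) * (Real.exp (-r) * r ^ (ν - 1/2)) := by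
    set M := 4^(ν:ℝ) * r ^ (ν - 1) * Real.exp (-r) with hM
    have hM0 : 0 ≤ M := by positivity
    have hpt : ∀ s ∈ Ioc r (4*r), f s ≤ M * Real.exp (-(16*r)⁻¹ * (s - 2*r)^2) := by
      intro s hs
      have hs1 : r < s := hs.1
      have hs2 : s ≤ 4*r := hs.2
      have hs0 : 0 < s := lt_trans hr0 hs1
      have hbase : s ^ (ν - 1) ≤ 4^(ν:ℝ) * r ^ (ν - 1) := by
        rcases le_or_gt 1 ν with h1 | h1
        · calc s ^ (ν-1) ≤ (4*r) ^ (ν-1) :=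
                Real.rpow_le_rpow hs0.le hs2 (by linarith)
            _ = 4 ^ (ν-1) * r ^ (ν-1) := Real.mul_rpow (by norm_num) hr0.le
            _ ≤ 4^(ν:ℝ) * r ^ (ν-1) := by
                refine mul_le_mul_of_nonneg_right ?_ (Real.rpow_nonneg hr0.le _)
                exact Real.rpow_le_rpow_of_exponent_le (by norm_num) (by linarith)
        · calc s ^ (ν-1) ≤ r ^ (ν-1) :=
                Real.rpow_le_rpow_of_nonpos hr0 hs1.le (by linarith)
            _ ≤ 4^(ν:ℝ) * r ^ (ν-1) := by
                refine le_mul_of_one_le_left (Real.rpow_nonneg hr0.le _) ?_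
                exact Real.one_le_rpow (by norm_num) hν0.le
      have hexp : Real.exp (-(s/4) - r^2/s) ≤
          Real.exp (-r) * Real.exp (-(16*r)⁻¹ * (s - 2*r)^2) := by
        rw [aux_exp_id r s hs0, ← Real.exp_add, Real.exp_le_exp]
        have hq : (16*r)⁻¹ * (s - 2*r)^2 ≤ (s - 2*r)^2/(4*s) := by
          rw [inv_mul_eq_div, div_le_div_iff₀ (by positivity) (by positivity)]
          nlinarith [sq_nonneg (s - 2*r)]
        linarith
      calc f s = s ^ (ν-1) * Real.exp (-(s/4) - r^2/s) := rfl
        _ ≤ (4^(ν:ℝ) * r ^ (ν-1)) * (Real.exp (-r) * Real.exp (-(16*r)⁻¹ * (s - 2*r)^2)) := by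
            refine mul_le_mul hbase hexp (Real.exp_pos _).le (by positivity)
        _ = M * Real.exp (-(16*r)⁻¹ * (s - 2*r)^2) := by rw [hM]; ring
    have step : (∫ s in Ioc r (4*r), f s) ≤
        ∫ s in Ioc r (4*r), M * Real.exp (-(16*r)⁻¹ * (s - 2*r)^2) :=
      setIntegral_mono_on (hfi.mono_set hsub2) ((hg2.const_mul M).integrableOn)
        measurableSet_Ioc hpt
    have step2 : (∫ s in Ioc r (4*r), M * Real.exp (-(16*r)⁻¹ * (s - 2*r)^2)) ≤
        M * (Real.sqrt (16*π) * r ^ ((1:ℝ)/2)) := by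
      rw [integral_const_mul, ← hg2val]
      refine mul_le_mul_of_nonneg_left ?_ hM0
      refine setIntegral_le_integral hg2 (ae_of_all _ fun s => ?_)
      positivity
    have hfin : M * (Real.sqrt (16*π) * r ^ ((1:ℝ)/2)) =
        4^(ν:ℝ) * Real.sqrt (16*π) * (Real.exp (-r) * r ^ (ν - 1/2)) := by
      have hrr : r ^ (ν - 1) * r ^ ((1:ℝ)/2) = r ^ (ν - 1/2) := by
        rw [← Real.rpow_add hr0]; congr 1; ring
      rw [hM]
      linear_combination (4^(ν:ℝ) * Real.exp (-r) * Real.sqrt (16*π)) * hrr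
    linarith [le_trans step step2, hfin]
  -- Piece 3 : (4r, ∞)
  have T3 : (∫ s in Ioi (4*r), f s) ≤ Cν * (Real.exp (-r) * r ^ (ν - 1/2)) := by
    have hpt : ∀ s ∈ Ioi (4*r), f s ≤
        Real.exp (-r) * (s ^ (ν-1) * Real.exp (-(16⁻¹:ℝ) * s ^ (1:ℝ))) := by
      intro s hs
      have hs1 : 4*r < s := hs
      have hs0 : 0 < s := lt_trans (by positivity) hs1
      have hexp : Real.exp (-(s/4) - r^2/s) ≤
          Real.exp (-r) * Real.exp (-(16⁻¹:ℝ) * s ^ (1:ℝ)) := by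
        rw [aux_exp_id r s hs0, ← Real.exp_add, Real.exp_le_exp, Real.rpow_one]
        have hq : 16⁻¹ * s ≤ (s - 2*r)^2/(4*s) := by
          rw [inv_mul_eq_div, div_le_div_iff₀ (by norm_num) (by positivity)]
          nlinarith [mul_nonneg (by linarith : (0:ℝ) ≤ 3*s - 4*r)
            (by linarith : (0:ℝ) ≤ s - 4*r)]
        linarith
      calc f s = s ^ (ν-1) * Real.exp (-(s/4) - r^2/s) := rfl
        _ ≤ s ^ (ν-1) * (Real.exp (-r) * Real.exp (-(16⁻¹:ℝ) * s ^ (1:ℝ))) :=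
            mul_le_mul_of_nonneg_left hexp (Real.rpow_nonneg hs0.le _)
        _ = Real.exp (-r) * (s ^ (ν-1) * Real.exp (-(16⁻¹:ℝ) * s ^ (1:ℝ))) := by ring
    have step : (∫ s in Ioi (4*r), f s) ≤
        ∫ s in Ioi (4*r), Real.exp (-r) * (s ^ (ν-1) * Real.exp (-(16⁻¹:ℝ) * s ^ (1:ℝ))) :=
      setIntegral_mono_on (hfi.mono_set hsub3)
        ((hCνint.mono_set hsub3).const_mul _) measurableSet_Ioi hpt
    have step2 :
        (∫ s in Ioi (4*r), Real.exp (-r) * (s ^ (ν-1) * Real.exp (-(16⁻¹:ℝ) * s ^ (1:ℝ))))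
        ≤ Real.exp (-r) * Cν := by
      rw [integral_const_mul]
      refine mul_le_mul_of_nonneg_left ?_ (Real.exp_pos _).le
      rw [hCν]
      refine setIntegral_mono_set hCνint ?_ (HasSubset.Subset.eventuallyLE hsub3)
      filter_upwards [ae_restrict_mem measurableSet_Ioi] with s hs
      have : (0:ℝ) < s := hs
      dsimp
      positivity
    have hrp1 : (1:ℝ) ≤ r ^ (ν - 1/2) := Real.one_le_rpow hr (by linarith)
    have h1 : Cν * Real.exp (-r) * 1 ≤ Cν * Real.exp (-r) * r ^ (ν - 1/2) :=
      mul_le_mul_of_nonneg_left hrp1 (mul_nonneg hCν0 (Real.exp_pos _).le)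
    nlinarith [le_trans step step2]
  rw [hsplit]
  nlinarith [T1, T2, T3]


/-- `ξ(r) = r²` if `d + α > 2`; `ξ(r) = r^{1+α}` if `d = 1 > α`;
`ξ(r) = r² ln(1/r)` if `d = 1 = α` (for `1 ≤ d` and `α ∈ (0,2)` these cover all cases). -/
noncomputable def xi (d : ℕ) (α r : ℝ) : ℝ :=
  if 2 < (d : ℝ) + α then r ^ 2
  else if α < 1 then r ^ (1 + α)
  else r ^ 2 * Real.log (1 / r)

/-- There is `c = c(d,α) > 1` with
`c⁻¹ e^{-r} r^{(d+α-1)/2} ≤ ψ(r) ≤ c e^{-r} r^{(d+α-1)/2}` for all `r ≥ 1`. -/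
theorem psi_asymptotics (d : ℕ) (hd : 1 ≤ d) (α : ℝ) (hα : α ∈ Set.Ioo (0:ℝ) 2) :
    ∃ c : ℝ, 1 < c ∧ ∀ r : ℝ, 1 ≤ r →
      c⁻¹ * Real.exp (-r) * r ^ (((d : ℝ) + α - 1) / 2) ≤ psi d α r ∧
      psi d α r ≤ c * Real.exp (-r) * r ^ (((d : ℝ) + α - 1) / 2) := by
  obtain ⟨hα0, hα2⟩ := hα
  have hd1 : (1:ℝ) ≤ (d:ℝ) := by exact_mod_cast hd
  have hν : 1/2 < ((d:ℝ) + α)/2 := by linarith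
  have hν0 : 0 < ((d:ℝ) + α)/2 := by linarith
  obtain ⟨C, hC0, hCub⟩ := aux_upper hν
  have hc10 : 0 < Real.exp (-(1/8:ℝ)) / 3 := by positivity
  set c1 : ℝ := Real.exp (-(1/8:ℝ)) / 3 with hc1
  set A : ℝ := 2 ^ (-((d:ℝ) + α)) * (Real.Gamma (((d:ℝ) + α) / 2))⁻¹ with hA
  have hA0 : 0 < A := by
    have h2 : (0:ℝ) < 2 ^ (-((d:ℝ) + α)) := Real.rpow_pos_of_pos two_pos _
    have hg : 0 < Real.Gamma (((d:ℝ) + α)/2) := Real.Gamma_pos_of_pos hν0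
    rw [hA]; positivity
  have hAc1 : 0 < A * c1 := by positivity
  refine ⟨max ((A*c1)⁻¹) (A*C) + 1, ?_, fun r hr => ?_⟩
  · have h0 : (0:ℝ) < (A*c1)⁻¹ := by positivity
    have := le_max_left ((A*c1)⁻¹) (A*C)
    linarith
  · set c := max ((A*c1)⁻¹) (A*C) + 1 with hc
    have h0 : (0:ℝ) < (A*c1)⁻¹ := by positivity
    have hmaxl := le_max_left ((A*c1)⁻¹) (A*C)
    have hmaxr := le_max_right ((A*c1)⁻¹) (A*C)
    have hcpos : 0 < c := by rw [hc]; linarith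
    have hcinv : c⁻¹ ≤ A * c1 := by
      have h1 : (A*c1)⁻¹ ≤ c := by rw [hc]; linarith
      calc c⁻¹ ≤ ((A*c1)⁻¹)⁻¹ := inv_anti₀ h0 h1
        _ = A * c1 := inv_inv _
    have hcC : A * C ≤ c := by rw [hc]; linarith
    have hr0 : (0:ℝ) < r := by linarith
    have hexpω : ((d:ℝ) + α - 1)/2 = ((d:ℝ)+α)/2 - 1/2 := by ring
    have hpsi : psi d α r = A * ∫ s in Set.Ioi (0:ℝ),
        s ^ (((d:ℝ)+α)/2 - 1) * Real.exp (-(s/4) - r^2/s) := rfl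
    have hX0 : 0 ≤ Real.exp (-r) * r ^ (((d:ℝ)+α)/2 - 1/2) := by positivity
    have hlo := aux_lower hν r hr
    have hup := hCub r hr
    constructor
    · rw [hexpω, hpsi]
      calc c⁻¹ * Real.exp (-r) * r ^ (((d:ℝ)+α)/2 - 1/2)
          = c⁻¹ * (Real.exp (-r) * r ^ (((d:ℝ)+α)/2 - 1/2)) := by ring
        _ ≤ (A * c1) * (Real.exp (-r) * r ^ (((d:ℝ)+α)/2 - 1/2)) :=
            mul_le_mul_of_nonneg_right hcinv hX0
        _ = A * (c1 * (Real.exp (-r) * r ^ (((d:ℝ)+α)/2 - 1/2))) := by ring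
        _ ≤ A * ∫ s in Set.Ioi (0:ℝ),
              s ^ (((d:ℝ)+α)/2 - 1) * Real.exp (-(s/4) - r^2/s) :=
            mul_le_mul_of_nonneg_left hlo hA0.le
    · rw [hexpω, hpsi]
      calc A * ∫ s in Set.Ioi (0:ℝ),
              s ^ (((d:ℝ)+α)/2 - 1) * Real.exp (-(s/4) - r^2/s)
          ≤ A * (C * (Real.exp (-r) * r ^ (((d:ℝ)+α)/2 - 1/2))) :=
            mul_le_mul_of_nonneg_left hup hA0.le
        _ = (A * C) * (Real.exp (-r) * r ^ (((d:ℝ)+α)/2 - 1/2)) := by ring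
        _ ≤ c * (Real.exp (-r) * r ^ (((d:ℝ)+α)/2 - 1/2)) :=
            mul_le_mul_of_nonneg_right hcC hX0
        _ = c * Real.exp (-r) * r ^ (((d:ℝ)+α)/2 - 1/2) := by ring
end

section
/- For every a > 0 and M > 0 there exists a constant C > 0, depending only on d, α, a and M, such that for every m ∈ (0, M] and every r ∈ (0, a), j^m(r) ≤ C · j^m(2r). -/
open MeasureTheory Real Set

lemma psi_integrand_contOn (q r : ℝ) :
    ContinuousOn (fun s : ℝ => s ^ (q - 1) * Real.exp (-(s / 4) - r ^ 2 / s)) (Set.Ioi 0) := by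
  intro s hs
  have hs0 : (0:ℝ) < s := hs
  apply ContinuousAt.continuousWithinAt
  have h1 : ContinuousAt (fun s : ℝ => s ^ (q - 1)) s :=
    Real.continuousAt_rpow_const s _ (Or.inl hs0.ne')
  have h2 : ContinuousAt (fun s : ℝ => Real.exp (-(s / 4) - r ^ 2 / s)) s := by
    apply Real.continuous_exp.continuousAt.comp
    exact ((continuousAt_id.div_const 4).neg.sub
      (continuousAt_const.div continuousAt_id hs0.ne'))
  exact h1.mul h2

lemma psi_integrand_integrable (q r : ℝ) (hq : 0 < q) :
    IntegrableOn (fun s => s ^ (q - 1) * Real.exp (-(s / 4) - r ^ 2 / s)) (Set.Ioi (0:ℝ)) := by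
  have hmaj : IntegrableOn (fun s : ℝ => s ^ (q - 1) * Real.exp (-(1/4) * s ^ (1:ℝ)))
      (Set.Ioi (0:ℝ)) :=
    integrableOn_rpow_mul_exp_neg_mul_rpow (by linarith) (by norm_num) (by norm_num)
  refine hmaj.mono' ?_ ?_
  · exact (psi_integrand_contOn q r).aestronglyMeasurable measurableSet_Ioi
  · filter_upwards [ae_restrict_mem measurableSet_Ioi] with s hs
    have hs0 : (0:ℝ) < s := hs
    rw [Real.norm_eq_abs, abs_mul, abs_of_nonneg (Real.rpow_nonneg hs0.le _),
      abs_of_nonneg (Real.exp_pos _).le]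
    gcongr
    rw [Real.rpow_one]
    have : 0 ≤ r ^ 2 / s := div_nonneg (sq_nonneg r) hs0.le
    nlinarith

lemma psi_integral_anti {q x y : ℝ} (hq : 0 < q) (hx : 0 ≤ x) (hxy : x ≤ y) :
    (∫ s in Set.Ioi (0 : ℝ), s ^ (q - 1) * Real.exp (-(s / 4) - y ^ 2 / s)) ≤
    ∫ s in Set.Ioi (0 : ℝ), s ^ (q - 1) * Real.exp (-(s / 4) - x ^ 2 / s) := by
  refine setIntegral_mono_on (psi_integrand_integrable q y hq)
    (psi_integrand_integrable q x hq) measurableSet_Ioi ?_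
  intro s hs
  have hs0 : (0:ℝ) < s := hs
  have hsq : x ^ 2 ≤ y ^ 2 := pow_le_pow_left₀ hx hxy 2
  have hexp : Real.exp (-(s / 4) - y ^ 2 / s) ≤ Real.exp (-(s / 4) - x ^ 2 / s) := by
    apply Real.exp_le_exp.mpr
    have hdiv : x ^ 2 / s ≤ y ^ 2 / s := by gcongr
    linarith
  exact mul_le_mul_of_nonneg_left hexp (Real.rpow_nonneg hs0.le _)

lemma psi_integral_pos (q r : ℝ) (hq : 0 < q) :
    0 < ∫ s in Set.Ioi (0 : ℝ), s ^ (q - 1) * Real.exp (-(s / 4) - r ^ 2 / s) := by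
  refine (setIntegral_pos_iff_support_of_nonneg_ae ?_ ?_).mpr ?_
  · filter_upwards [ae_restrict_mem measurableSet_Ioi] with s hs
    exact mul_nonneg (Real.rpow_nonneg (le_of_lt hs) _) (Real.exp_pos _).le
  · exact psi_integrand_integrable q r hq
  · have hsub : (Set.Ioi (0:ℝ)) ⊆ Function.support
        (fun s => s ^ (q - 1) * Real.exp (-(s / 4) - r ^ 2 / s)) ∩ Set.Ioi 0 := by
      intro s hs
      refine ⟨?_, hs⟩
      have hs0 : (0:ℝ) < s := hs
      exact (mul_pos (Real.rpow_pos_of_pos hs0 _) (Real.exp_pos _)).ne'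
    refine lt_of_lt_of_le ?_ (measure_mono hsub)
    simp [Real.volume_Ioi]

lemma psi_pos (d : ℕ) (α r : ℝ) (hα : 0 < α) : 0 < psi d α r := by
  have hq : 0 < ((d:ℝ) + α) / 2 := by positivity
  unfold psi
  have h1 := Real.Gamma_pos_of_pos hq
  have h2 := psi_integral_pos (((d:ℝ) + α) / 2) r hq
  positivity

lemma psi_anti (d : ℕ) (α : ℝ) (hα : 0 < α) {x y : ℝ} (hx : 0 ≤ x) (hxy : x ≤ y) :
    psi d α y ≤ psi d α x := by
  have hq : 0 < ((d:ℝ) + α) / 2 := by positivity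
  have hΓ := Real.Gamma_pos_of_pos hq
  have h2 : (0:ℝ) ≤ 2 ^ (-((d : ℝ) + α)) * (Real.Gamma (((d : ℝ) + α) / 2))⁻¹ := by positivity
  exact mul_le_mul_of_nonneg_left (psi_integral_anti hq hx hxy) h2

/-- For every `a > 0` and `M > 0` there is `C = C(d,α,a,M) > 0` with
`j^m(r) ≤ C j^m(2r)` for every `m ∈ (0,M]` and `r ∈ (0,a)`. -/
theorem jm_doubling (d : ℕ) (hd : 1 ≤ d) (α : ℝ) (hα : α ∈ Set.Ioo (0:ℝ) 2)
    (a M : ℝ) (ha : 0 < a) (hM : 0 < M) :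
    ∃ C : ℝ, 0 < C ∧ ∀ m ∈ Set.Ioc (0:ℝ) M, ∀ r ∈ Set.Ioo (0:ℝ) a,
      jm d α m r ≤ C * jm d α m (2 * r) := by
  obtain ⟨hα0, hα2⟩ := hα
  set R : ℝ := M ^ (1/α) * a with hR
  have hMα : (0:ℝ) < M ^ (1/α) := Real.rpow_pos_of_pos hM _
  have hRpos : 0 < R := by positivity
  have hψ2R : 0 < psi d α (2 * R) := psi_pos d α _ hα0
  have hψ0 : 0 < psi d α 0 := psi_pos d α _ hα0
  refine ⟨(2:ℝ) ^ ((d:ℝ) + α) * psi d α 0 / psi d α (2 * R), by positivity, ?_⟩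
  rintro m ⟨hm0, hmM⟩ r ⟨hr0, hra⟩
  have hApos : 0 < Aconst d α := by
    have h1 : (0:ℝ) < Real.Gamma (((d : ℝ) + α) / 2) := Real.Gamma_pos_of_pos (by positivity)
    have h2 : (0:ℝ) < Real.Gamma (1 - α / 2) := Real.Gamma_pos_of_pos (by linarith)
    have hπ : (0:ℝ) < Real.pi ^ (-(d:ℝ)/2) := Real.rpow_pos_of_pos Real.pi_pos _
    unfold Aconst
    positivity
  have hc : (0:ℝ) < m ^ (1/α) := Real.rpow_pos_of_pos hm0 _
  have hcr_le : m ^ (1/α) * r ≤ R := by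
    have h1 : m ^ (1/α) ≤ M ^ (1/α) :=
      Real.rpow_le_rpow hm0.le hmM (by positivity)
    calc m ^ (1/α) * r ≤ M ^ (1/α) * r := mul_le_mul_of_nonneg_right h1 hr0.le
      _ ≤ M ^ (1/α) * a := mul_le_mul_of_nonneg_left hra.le hMα.le
  have hψr : psi d α (m ^ (1/α) * r) ≤ psi d α 0 :=
    psi_anti d α hα0 le_rfl (by positivity)
  have hψ2r : psi d α (2 * R) ≤ psi d α (m ^ (1/α) * (2 * r)) := by
    have hle : m ^ (1/α) * (2 * r) ≤ 2 * R := by nlinarith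
    exact psi_anti d α hα0 (by positivity) hle
  have hrpow : (2 * r) ^ (-(d:ℝ) - α) = (2:ℝ) ^ (-(d:ℝ) - α) * r ^ (-(d:ℝ) - α) :=
    Real.mul_rpow (by norm_num) hr0.le
  unfold jm
  rw [hrpow]
  have hrp : (0:ℝ) < r ^ (-(d:ℝ) - α) := Real.rpow_pos_of_pos hr0 _
  have h2p : (0:ℝ) < (2:ℝ) ^ (-(d:ℝ) - α) := Real.rpow_pos_of_pos (by norm_num) _
  have hkey : (2:ℝ) ^ ((d:ℝ) + α) * (2:ℝ) ^ (-(d:ℝ) - α) = 1 := by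
    rw [← Real.rpow_add (by norm_num : (0:ℝ) < 2)]
    norm_num
  calc Aconst d α * r ^ (-(d:ℝ) - α) * psi d α (m ^ (1/α) * r)
      ≤ Aconst d α * r ^ (-(d:ℝ) - α) * psi d α 0 :=
        mul_le_mul_of_nonneg_left hψr (by positivity)
    _ = ((2:ℝ) ^ ((d:ℝ) + α) * psi d α 0 / psi d α (2 * R)) *
        (Aconst d α * ((2:ℝ) ^ (-(d:ℝ) - α) * r ^ (-(d:ℝ) - α)) * psi d α (2 * R)) := by
        field_simp
        linear_combination (-1:ℝ) * hkey
    _ ≤ ((2:ℝ) ^ ((d:ℝ) + α) * psi d α 0 / psi d α (2 * R)) *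
        (Aconst d α * ((2:ℝ) ^ (-(d:ℝ) - α) * r ^ (-(d:ℝ) - α)) *
          psi d α (m ^ (1/α) * (2 * r))) := by
        apply mul_le_mul_of_nonneg_left (mul_le_mul_of_nonneg_left hψ2r (by positivity))
        positivity
end

section
/- For every a > 0 and M > 0 there exists a constant C > 0, depending only on d, α, a and M, such that for every m ∈ (0, M] and every r > a, j^m(r) ≤ C · j^m(r + a). -/
open MeasureTheory Real Set

noncomputable def Gfun (ν x : ℝ) : ℝ :=
  ∫ s in Set.Ioi (0 : ℝ), s ^ (ν - 1) * Real.exp (-(s / 4) - x ^ 2 / s)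

lemma Gcont (ν x : ℝ) :
    ContinuousOn (fun s : ℝ => s ^ (ν - 1) * Real.exp (-(s / 4) - x ^ 2 / s)) (Set.Ioi 0) := by
  apply ContinuousOn.mul
  · intro s hs
    exact (continuousWithinAt_id.rpow_const (Or.inl (ne_of_gt hs)))
  · apply Real.continuous_exp.comp_continuousOn
    apply ContinuousOn.sub
    · exact ((continuousOn_id.div_const 4).neg)
    · exact continuousOn_const.div continuousOn_id (fun s hs => ne_of_gt hs)

lemma G_integrable {ν : ℝ} (hν : 0 < ν) (x : ℝ) :
    IntegrableOn (fun s : ℝ => s ^ (ν - 1) * Real.exp (-(s / 4) - x ^ 2 / s)) (Set.Ioi 0) := by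
  have hmaj : IntegrableOn (fun s : ℝ => s ^ (ν - 1) * Real.exp (-(4⁻¹ : ℝ) * s ^ (1 : ℝ)))
      (Set.Ioi 0) :=
    integrableOn_rpow_mul_exp_neg_mul_rpow (by linarith) zero_lt_one (by norm_num)
  apply Integrable.mono' hmaj ((Gcont ν x).aestronglyMeasurable measurableSet_Ioi)
  rw [ae_restrict_iff' measurableSet_Ioi]
  filter_upwards with s hs
  have hs0 : (0:ℝ) < s := hs
  have h1 : (0:ℝ) ≤ s ^ (ν - 1) := Real.rpow_nonneg hs0.le _
  rw [Real.norm_eq_abs, abs_mul, abs_of_nonneg h1, abs_of_nonneg (Real.exp_nonneg _)]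
  apply mul_le_mul_of_nonneg_left _ h1
  apply Real.exp_le_exp.2
  rw [Real.rpow_one]
  have : 0 ≤ x ^ 2 / s := div_nonneg (sq_nonneg x) hs0.le
  linarith

lemma G_anti {ν : ℝ} (hν : 0 < ν) {x y : ℝ} (hx : 0 ≤ x) (hxy : x ≤ y) :
    Gfun ν y ≤ Gfun ν x := by
  apply setIntegral_mono_on (G_integrable hν y) (G_integrable hν x) measurableSet_Ioi
  intro s hs
  have hs0 : (0:ℝ) < s := hs
  apply mul_le_mul_of_nonneg_left _ (Real.rpow_nonneg hs0.le _)
  apply Real.exp_le_exp.2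
  have : x ^ 2 / s ≤ y ^ 2 / s :=
    div_le_div_of_nonneg_right (pow_le_pow_left₀ hx hxy 2) hs0.le
  linarith

lemma G_pos {ν : ℝ} (hν : 0 < ν) (x : ℝ) : 0 < Gfun ν x := by
  rw [Gfun]
  have hsupp : (Function.support fun s : ℝ =>
      s ^ (ν - 1) * Real.exp (-(s / 4) - x ^ 2 / s)) ∩ Ioi 0 = Ioi 0 := by
    rw [inter_eq_right]
    intro s hs
    exact mul_ne_zero (rpow_pos_of_pos hs _).ne' (Real.exp_pos _).ne'
  rw [setIntegral_pos_iff_support_of_nonneg_ae]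
  · rw [hsupp, volume_Ioi, ← ENNReal.ofReal_zero]
    exact ENNReal.ofReal_lt_top
  · refine Filter.eventually_of_mem (self_mem_ae_restrict measurableSet_Ioi) fun s hs =>
      (mul_pos (rpow_pos_of_pos hs _) (Real.exp_pos _)).le
  · exact G_integrable hν x

set_option maxHeartbeats 1000000 in
lemma G_shift {ν : ℝ} (hν : 0 < ν) {B : ℝ} (hB : 0 < B) :
    ∃ C : ℝ, 0 < C ∧ ∀ x : ℝ, 0 < x → Gfun ν x ≤ C * Gfun ν (x + B) := by
  set x₀ : ℝ := max B 1 with hx₀def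
  have hx₀B : B ≤ x₀ := le_max_left _ _
  have hx₀1 : (1:ℝ) ≤ x₀ := le_max_right _ _
  set clow : ℝ := min ((2:ℝ) ^ (ν - 1)) ((3:ℝ) ^ (ν - 1)) with hclowdef
  have hclow : 0 < clow := lt_min (Real.rpow_pos_of_pos two_pos _) (Real.rpow_pos_of_pos (by norm_num) _)
  set K : ℝ := 4 * Real.exp (1/4) / (Real.exp 1 * ν * clow) with hKdef
  have hK : 0 < K := by
    apply div_pos (by positivity) (by positivity)
  set C : ℝ := max ((K + 1) * Real.exp (3 * B)) (Gfun ν 0 / Gfun ν (x₀ + B)) with hCdef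
  have hC : 0 < C :=
    lt_max_of_lt_left (by positivity)
  clear_value x₀ clow K C
  refine ⟨C, hC, fun x hx0 => ?_⟩
  rcases le_or_gt x x₀ with hcase | hcase
  · -- small x : use monotonicity
    have h1 : Gfun ν x ≤ Gfun ν 0 := G_anti hν le_rfl hx0.le
    have h2 : Gfun ν (x₀ + B) ≤ Gfun ν (x + B) := G_anti hν (by linarith) (by linarith)
    have h3 : Gfun ν 0 / Gfun ν (x₀ + B) ≤ C := by rw [hCdef]; exact le_max_right _ _
    have hp := G_pos hν (x₀ + B)
    have hp2 := G_pos hν (x + B)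
    calc Gfun ν x ≤ Gfun ν 0 := h1
      _ = (Gfun ν 0 / Gfun ν (x₀ + B)) * Gfun ν (x₀ + B) := by field_simp
      _ ≤ C * Gfun ν (x + B) := by
          apply mul_le_mul h3 h2 hp.le hC.le
  · -- large x
    have hx1 : (1:ℝ) ≤ x := le_trans hx₀1 hcase.le
    have hxB : B ≤ x := le_trans hx₀B hcase.le
    set g : ℝ → ℝ → ℝ := fun y s => s ^ (ν - 1) * Real.exp (-(s / 4) - y ^ 2 / s) with hgdef
    have hint : ∀ y, IntegrableOn (g y) (Set.Ioi 0) := fun y => G_integrable hν y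
    have hνm1 : (-1:ℝ) < ν - 1 := by linarith
    -- split
    have hsplit : Gfun ν x = (∫ s in Set.Ioc 0 x, g x s) + ∫ s in Set.Ioi x, g x s := by
      rw [Gfun, ← Set.Ioc_union_Ioi_eq_Ioi hx0.le,
        setIntegral_union (Set.Ioc_disjoint_Ioi le_rfl) measurableSet_Ioi
          ((hint x).mono_set Set.Ioc_subset_Ioi_self)
          ((hint x).mono_set (Set.Ioi_subset_Ioi hx0.le))]
    -- upper bound on Ioc part
    have hmajint : IntegrableOn (fun s : ℝ => Real.exp (-(5 * x / 4)) * s ^ (ν - 1))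
        (Set.Ioc 0 x) := by
      have h : IntegrableOn (fun s : ℝ => s ^ (ν - 1)) (Set.Ioc 0 x) := by
        rw [← intervalIntegrable_iff_integrableOn_Ioc_of_le hx0.le]
        exact intervalIntegral.intervalIntegrable_rpow' hνm1
      exact h.const_mul _
    have hU : (∫ s in Set.Ioc 0 x, g x s) ≤ Real.exp (-(5 * x / 4)) * (x ^ ν / ν) := by
      have step1 : (∫ s in Set.Ioc 0 x, g x s)
          ≤ ∫ s in Set.Ioc 0 x, Real.exp (-(5 * x / 4)) * s ^ (ν - 1) := by
        apply setIntegral_mono_on ((hint x).mono_set Set.Ioc_subset_Ioi_self) hmajint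
          measurableSet_Ioc
        intro s hs
        obtain ⟨hs0, hsx⟩ := hs
        rw [hgdef, mul_comm (Real.exp (-(5 * x / 4)))]
        apply mul_le_mul_of_nonneg_left _ (Real.rpow_nonneg hs0.le _)
        apply Real.exp_le_exp.2
        have key : (5 * x - s) / 4 ≤ x ^ 2 / s := by
          rw [div_le_div_iff₀ (by norm_num) hs0]
          nlinarith [mul_nonneg (sub_nonneg.2 hsx) (by nlinarith : (0:ℝ) ≤ 4 * x - s)]
        have hxs : 0 < x ^ 2 / s := div_pos (by positivity) hs0
        linarith
      have step2 : (∫ s in Set.Ioc 0 x, Real.exp (-(5 * x / 4)) * s ^ (ν - 1))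
          = Real.exp (-(5 * x / 4)) * (x ^ ν / ν) := by
        rw [MeasureTheory.integral_const_mul]
        congr 1
        rw [← intervalIntegral.integral_of_le hx0.le,
          integral_rpow (Or.inl hνm1)]
        rw [Real.zero_rpow (by linarith : ν - 1 + 1 ≠ 0), sub_add_cancel, sub_zero]
      linarith [step1, step2.le, step2.ge]
    -- lower bound on Ioi part
    have hL : clow * x ^ (ν - 1) * Real.exp (-(x + 1/4)) ≤ ∫ s in Set.Ioi x, g x s := by
      have hsub : Set.Ioc (2 * x) (2 * x + 1) ⊆ Set.Ioi x := by
        intro s hs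
        simp only [Set.mem_Ioc, Set.mem_Ioi] at *
        linarith [hs.1]
      have hsub0 : Set.Ioc (2 * x) (2 * x + 1) ⊆ Set.Ioi (0:ℝ) := by
        intro s hs
        simp only [Set.mem_Ioc, Set.mem_Ioi] at *
        linarith [hs.1]
      have hmono : (∫ s in Set.Ioc (2*x) (2*x+1), g x s) ≤ ∫ s in Set.Ioi x, g x s := by
        apply setIntegral_mono_set ((hint x).mono_set (Set.Ioi_subset_Ioi hx0.le))
        · filter_upwards [self_mem_ae_restrict (measurableSet_Ioi : MeasurableSet (Set.Ioi x))]
            with s hs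
          have hs0 : 0 < s := lt_trans hx0 hs
          positivity
        · exact HasSubset.Subset.eventuallyLE hsub
      have hconst : clow * x ^ (ν - 1) * Real.exp (-(x + 1/4)) * (volume (Set.Ioc (2*x) (2*x+1))).toReal
          ≤ ∫ s in Set.Ioc (2*x) (2*x+1), g x s := by
        rw [mul_comm _ (volume _).toReal, ← smul_eq_mul]
        apply setIntegral_ge_of_const_le measurableSet_Ioc measure_Ioc_lt_top.ne
        · intro s hs
          obtain ⟨hs1, hs2⟩ := hs
          have hs0 : 0 < s := by linarith
          have hexp : -(x + 1/4) ≤ -(s / 4) - x ^ 2 / s := by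
            have h1 : x ^ 2 / s ≤ x / 2 := by
              rw [div_le_div_iff₀ hs0 (by norm_num)]
              nlinarith
            linarith
          have hrpow : clow * x ^ (ν - 1) ≤ s ^ (ν - 1) := by
            rcases le_or_gt 1 ν with hν1 | hν1
            · have h1 : (2 * x) ^ (ν - 1) ≤ s ^ (ν - 1) :=
                Real.rpow_le_rpow (by linarith) hs1.le (by linarith)
              have h2 : (2 * x) ^ (ν - 1) = 2 ^ (ν - 1) * x ^ (ν - 1) :=
                Real.mul_rpow (by norm_num) hx0.le
              have h3 : clow ≤ 2 ^ (ν - 1) := by rw [hclowdef]; exact min_le_left _ _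
              nlinarith [Real.rpow_nonneg hx0.le (ν - 1)]
            · have h1 : s ^ (ν - 1) ≥ (3 * x) ^ (ν - 1) := by
                apply Real.rpow_le_rpow_of_nonpos hs0 (by linarith) (by linarith)
              have h2 : (3 * x) ^ (ν - 1) = 3 ^ (ν - 1) * x ^ (ν - 1) :=
                Real.mul_rpow (by norm_num) hx0.le
              have h3 : clow ≤ 3 ^ (ν - 1) := by rw [hclowdef]; exact min_le_right _ _
              nlinarith [Real.rpow_nonneg hx0.le (ν - 1)]
          calc clow * x ^ (ν - 1) * Real.exp (-(x + 1/4))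
              ≤ s ^ (ν - 1) * Real.exp (-(x + 1/4)) :=
                mul_le_mul_of_nonneg_right hrpow (Real.exp_nonneg _)
            _ ≤ g x s := mul_le_mul_of_nonneg_left (Real.exp_le_exp.2 hexp)
                (Real.rpow_nonneg (by linarith) _)
        · exact (hint x).mono_set hsub0
      have hvol : (volume (Set.Ioc (2*x) (2*x+1))).toReal = 1 := by
        rw [Real.volume_Ioc]
        norm_num
      rw [hvol, mul_one] at hconst
      linarith
    -- ratio: Ioc part controlled by Ioi part
    have hxe : x * Real.exp (-(5 * x / 4)) ≤ 4 / Real.exp 1 * Real.exp (-x) := by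
      have h1 := Real.add_one_le_exp (x / 4 - 1)
      have h2 : 0 < Real.exp (-(5 * x / 4)) := Real.exp_pos _
      have h3 : x * Real.exp (-(5 * x / 4)) ≤ 4 * Real.exp (x / 4 - 1) * Real.exp (-(5 * x / 4)) := by
        nlinarith
      have h4 : 4 * Real.exp (x / 4 - 1) * Real.exp (-(5 * x / 4))
          = 4 / Real.exp 1 * Real.exp (-x) := by
        rw [mul_assoc, ← Real.exp_add]
        rw [show x / 4 - 1 + -(5 * x / 4) = -x + -1 by ring, Real.exp_add]
        simp [Real.exp_neg]
        ring
      linarith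
    have hratio : (∫ s in Set.Ioc 0 x, g x s) ≤ K * ∫ s in Set.Ioi x, g x s := by
      have hxpow : (0:ℝ) < x ^ (ν - 1) := Real.rpow_pos_of_pos hx0 _
      have e1 : Real.exp (-(5 * x / 4)) * (x ^ ν / ν)
          = (x * Real.exp (-(5 * x / 4))) * (x ^ (ν - 1) / ν) := by
        rw [show x ^ ν = x ^ (ν - 1) * x by
          rw [← Real.rpow_add_one hx0.ne' (ν - 1), sub_add_cancel]]
        ring
      have e2 : (4 / Real.exp 1 * Real.exp (-x)) * (x ^ (ν - 1) / ν)
          = K * (clow * x ^ (ν - 1) * Real.exp (-(x + 1/4))) := by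
        rw [hKdef, show Real.exp (-x) = Real.exp (1/4) * Real.exp (-(x + 1/4)) by
          rw [← Real.exp_add]; norm_num]
        field_simp
      calc (∫ s in Set.Ioc 0 x, g x s) ≤ Real.exp (-(5 * x / 4)) * (x ^ ν / ν) := hU
        _ = (x * Real.exp (-(5 * x / 4))) * (x ^ (ν - 1) / ν) := e1
        _ ≤ (4 / Real.exp 1 * Real.exp (-x)) * (x ^ (ν - 1) / ν) :=
            mul_le_mul_of_nonneg_right hxe (by positivity)
        _ = K * (clow * x ^ (ν - 1) * Real.exp (-(x + 1/4))) := e2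
        _ ≤ K * ∫ s in Set.Ioi x, g x s := mul_le_mul_of_nonneg_left hL hK.le
    -- shift step
    have hshift : (∫ s in Set.Ioi x, g x s)
        ≤ Real.exp (3 * B) * ∫ s in Set.Ioi x, g (x + B) s := by
      rw [← MeasureTheory.integral_const_mul]
      apply setIntegral_mono_on ((hint x).mono_set (Set.Ioi_subset_Ioi hx0.le))
        (((hint (x + B)).mono_set (Set.Ioi_subset_Ioi hx0.le)).const_mul _) measurableSet_Ioi
      intro s hs
      have hs0 : 0 < s := lt_trans hx0 hs
      have hsx : x ≤ s := (Set.mem_Ioi.1 hs).le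
      show s ^ (ν - 1) * Real.exp (-(s / 4) - x ^ 2 / s)
          ≤ Real.exp (3 * B) * (s ^ (ν - 1) * Real.exp (-(s / 4) - (x + B) ^ 2 / s))
      rw [show Real.exp (3 * B) * (s ^ (ν - 1) * Real.exp (-(s / 4) - (x + B) ^ 2 / s))
          = s ^ (ν - 1) * Real.exp (3 * B + (-(s / 4) - (x + B) ^ 2 / s)) by
        rw [Real.exp_add]; ring]
      apply mul_le_mul_of_nonneg_left _ (Real.rpow_nonneg hs0.le _)
      apply Real.exp_le_exp.2
      have key : (x + B) ^ 2 / s - x ^ 2 / s ≤ 3 * B := by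
        rw [div_sub_div_same, div_le_iff₀ hs0]
        nlinarith
      linarith
    -- tail step
    have htail : (∫ s in Set.Ioi x, g (x + B) s) ≤ Gfun ν (x + B) := by
      apply setIntegral_mono_set (hint (x + B))
      · filter_upwards [self_mem_ae_restrict (measurableSet_Ioi : MeasurableSet (Set.Ioi (0:ℝ)))]
          with s hs
        have hs0 : (0:ℝ) < s := hs
        positivity
      · exact HasSubset.Subset.eventuallyLE (Set.Ioi_subset_Ioi hx0.le)
    -- assemble
    have hIoi_nonneg : 0 ≤ ∫ s in Set.Ioi x, g x s := le_trans (by positivity) hL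
    have hfin : Gfun ν x ≤ (K + 1) * Real.exp (3 * B) * Gfun ν (x + B) := by
      calc Gfun ν x = (∫ s in Set.Ioc 0 x, g x s) + ∫ s in Set.Ioi x, g x s := hsplit
        _ ≤ K * (∫ s in Set.Ioi x, g x s) + ∫ s in Set.Ioi x, g x s := by linarith
        _ = (K + 1) * ∫ s in Set.Ioi x, g x s := by ring
        _ ≤ (K + 1) * (Real.exp (3 * B) * ∫ s in Set.Ioi x, g (x + B) s) :=
            mul_le_mul_of_nonneg_left hshift (by positivity)
        _ ≤ (K + 1) * (Real.exp (3 * B) * Gfun ν (x + B)) := by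
            apply mul_le_mul_of_nonneg_left _ (by positivity)
            exact mul_le_mul_of_nonneg_left htail (Real.exp_nonneg _)
        _ = (K + 1) * Real.exp (3 * B) * Gfun ν (x + B) := by ring
    calc Gfun ν x ≤ (K + 1) * Real.exp (3 * B) * Gfun ν (x + B) := hfin
      _ ≤ C * Gfun ν (x + B) := by
          apply mul_le_mul_of_nonneg_right _ (G_pos hν _).le
          rw [hCdef]; exact le_max_left _ _


/-- For every `a > 0` and `M > 0` there is `C = C(d,α,a,M) > 0` with
`j^m(r) ≤ C j^m(r + a)` for every `m ∈ (0,M]` and `r > a`. -/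
theorem jm_shift (d : ℕ) (hd : 1 ≤ d) (α : ℝ) (hα : α ∈ Set.Ioo (0:ℝ) 2)
    (a M : ℝ) (ha : 0 < a) (hM : 0 < M) :
    ∃ C : ℝ, 0 < C ∧ ∀ m ∈ Set.Ioc (0:ℝ) M, ∀ r : ℝ, a < r →
      jm d α m r ≤ C * jm d α m (r + a) := by
  obtain ⟨hα0, hα2⟩ := hα
  have hd1 : (1:ℝ) ≤ (d:ℝ) := by exact_mod_cast hd
  have hpsi : ∀ y : ℝ, psi d α y
      = 2 ^ (-((d : ℝ) + α)) * (Real.Gamma (((d : ℝ) + α) / 2))⁻¹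
        * Gfun (((d : ℝ) + α) / 2) y := fun _ => rfl
  set ν : ℝ := ((d : ℝ) + α) / 2 with hνdef
  have hν : 0 < ν := by rw [hνdef]; linarith
  set B : ℝ := M ^ (1/α) * a with hBdef
  have hB : 0 < B := mul_pos (Real.rpow_pos_of_pos hM _) ha
  obtain ⟨C₁, hC₁, hC₁'⟩ := G_shift hν hB
  have h2da : (0:ℝ) < 2 ^ ((d:ℝ) + α) := Real.rpow_pos_of_pos two_pos _
  refine ⟨2 ^ ((d:ℝ) + α) * C₁, mul_pos h2da hC₁, ?_⟩
  intro m hm r hr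
  obtain ⟨hm0, hmM⟩ := hm
  have hr0 : 0 < r := lt_trans ha hr
  have hra : 0 < r + a := by linarith
  set t : ℝ := m ^ (1/α) with htdef
  have ht0 : 0 < t := Real.rpow_pos_of_pos hm0 _
  have htB : t * a ≤ B := by
    rw [hBdef]
    apply mul_le_mul_of_nonneg_right _ ha.le
    exact Real.rpow_le_rpow hm0.le hmM (by positivity)
  -- pieces
  have hG1 : Gfun ν (t * r) ≤ C₁ * Gfun ν (t * (r + a)) := by
    have h1 := hC₁' (t * r) (mul_pos ht0 hr0)
    have h2 : Gfun ν (t * r + B) ≤ Gfun ν (t * (r + a)) := by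
      apply G_anti hν (by positivity)
      nlinarith
    nlinarith [G_pos hν (t * r + B)]
  have hrp : r ^ (-(d:ℝ) - α) ≤ 2 ^ ((d:ℝ) + α) * (r + a) ^ (-(d:ℝ) - α) := by
    have e1 : r ^ (-(d:ℝ) - α) = 2 ^ ((d:ℝ) + α) * (2 * r) ^ (-(d:ℝ) - α) := by
      rw [Real.mul_rpow (by norm_num) hr0.le, ← mul_assoc, ← Real.rpow_add two_pos,
        show (d:ℝ) + α + (-(d:ℝ) - α) = 0 by ring, Real.rpow_zero, one_mul]
    rw [e1]
    apply mul_le_mul_of_nonneg_left _ h2da.le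
    exact Real.rpow_le_rpow_of_nonpos hra (by linarith) (by linarith)
  have hGamma1 : 0 < Real.Gamma ν := Real.Gamma_pos_of_pos hν
  have hGamma2 : 0 < Real.Gamma (1 - α / 2) := Real.Gamma_pos_of_pos (by linarith)
  have hA : 0 < Aconst d α := by
    rw [Aconst]
    have h2 : (0:ℝ) < 2 ^ (α - 1) := Real.rpow_pos_of_pos two_pos _
    have h3 : (0:ℝ) < Real.pi ^ (-(d:ℝ) / 2) := Real.rpow_pos_of_pos Real.pi_pos _
    exact div_pos (by positivity) hGamma2
  have hc0 : (0:ℝ) < 2 ^ (-((d : ℝ) + α)) * (Real.Gamma ν)⁻¹ := by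
    have : (0:ℝ) < (2:ℝ) ^ (-((d : ℝ) + α)) := Real.rpow_pos_of_pos two_pos _
    positivity
  -- assemble
  have hjr : jm d α m r = (Aconst d α * (2 ^ (-((d : ℝ) + α)) * (Real.Gamma ν)⁻¹))
      * (r ^ (-(d:ℝ) - α) * Gfun ν (t * r)) := by
    rw [jm, hpsi]; ring
  have hjra : jm d α m (r + a) = (Aconst d α * (2 ^ (-((d : ℝ) + α)) * (Real.Gamma ν)⁻¹))
      * ((r + a) ^ (-(d:ℝ) - α) * Gfun ν (t * (r + a))) := by
    rw [jm, hpsi]; ring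
  rw [hjr, hjra]
  have hkey : r ^ (-(d:ℝ) - α) * Gfun ν (t * r)
      ≤ (2 ^ ((d:ℝ) + α) * (r + a) ^ (-(d:ℝ) - α)) * (C₁ * Gfun ν (t * (r + a))) := by
    apply mul_le_mul hrp hG1 (G_pos hν _).le
    positivity
  calc (Aconst d α * (2 ^ (-((d : ℝ) + α)) * (Real.Gamma ν)⁻¹))
        * (r ^ (-(d:ℝ) - α) * Gfun ν (t * r))
      ≤ (Aconst d α * (2 ^ (-((d : ℝ) + α)) * (Real.Gamma ν)⁻¹))
        * ((2 ^ ((d:ℝ) + α) * (r + a) ^ (-(d:ℝ) - α)) * (C₁ * Gfun ν (t * (r + a)))) :=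
        mul_le_mul_of_nonneg_left hkey (by positivity)
    _ = 2 ^ ((d:ℝ) + α) * C₁ * ((Aconst d α * (2 ^ (-((d : ℝ) + α)) * (Real.Gamma ν)⁻¹))
        * ((r + a) ^ (-(d:ℝ) - α) * Gfun ν (t * (r + a)))) := by ring
end

section
/- Let d ≥ 3 be an integer and α ∈ (0,2). There exists a constant c > 0 depending only on d and α such that for all x, y ∈ ℝ^d with x ≠ y, ∫_{ℝ^d} ∫_{ℝ^d} min(1, |x−z|^{−(d+α)}) · |z−w|^{α−d} · min(1, |w−y|^{−(d+α)}) dz dw ≤ c · |x−y|^{α−d}. -/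
open MeasureTheory Real Set

open Metric
open scoped ENNReal NNReal


noncomputable section DblIntAux

variable (d : ℕ) (α : ℝ)

def Gf (u : EuclideanSpace ℝ (Fin d)) : ℝ≥0∞ :=
  ENNReal.ofReal (min 1 (‖u‖ ^ (-((d : ℝ) + α))))

def Kf (u : EuclideanSpace ℝ (Fin d)) : ℝ≥0∞ :=
  ENNReal.ofReal (‖u‖ ^ (α - (d : ℝ)))

variable {d α}

lemma measurable_Gf : Measurable (Gf d α) := by
  apply ENNReal.measurable_ofReal.comp
  exact (measurable_const.min (measurable_norm.pow measurable_const))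

lemma measurable_Kf : Measurable (Kf d α) := by
  exact ENNReal.measurable_ofReal.comp (measurable_norm.pow measurable_const)

lemma Gf_le_one (u : EuclideanSpace ℝ (Fin d)) : Gf d α u ≤ 1 := by
  rw [Gf, ← ENNReal.ofReal_one]
  exact ENNReal.ofReal_le_ofReal (min_le_left _ _)

lemma Kf_le_of_le {r : ℝ} (hr : 0 < r) {u : EuclideanSpace ℝ (Fin d)} (hru : r ≤ ‖u‖)
    (hαd : α - (d : ℝ) ≤ 0) : Kf d α u ≤ ENNReal.ofReal (r ^ (α - (d : ℝ))) :=
  ENNReal.ofReal_le_ofReal (Real.rpow_le_rpow_of_nonpos hr hru hαd)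

lemma Gf_le_of_le {r : ℝ} (hr : 0 < r) {u : EuclideanSpace ℝ (Fin d)} (hru : r ≤ ‖u‖)
    (hαd : 0 ≤ (d : ℝ) + α) : Gf d α u ≤ ENNReal.ofReal (r ^ (-((d : ℝ) + α))) :=
  ENNReal.ofReal_le_ofReal <| (min_le_right _ _).trans
    (Real.rpow_le_rpow_of_nonpos hr hru (neg_nonpos.mpr hαd))

lemma lintegral_Gf_lt_top (hd : 1 ≤ d) (hα : 0 < α) :
    ∫⁻ u : EuclideanSpace ℝ (Fin d), Gf d α u < ∞ := by
  simp only [Gf]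
  set r : ℝ := (d : ℝ) + α with hr
  have hrpos : 0 < r := by positivity
  have hbd : ∀ u : EuclideanSpace ℝ (Fin d),
      min 1 (‖u‖ ^ (-r)) ≤ 2 ^ r * (1 + ‖u‖) ^ (-r) := by
    intro u
    have h1 : (0:ℝ) < 1 + ‖u‖ := by positivity
    have key : 2 ^ r * (1 + ‖u‖) ^ (-r) = (2 / (1 + ‖u‖)) ^ r := by
      rw [Real.div_rpow (by norm_num) h1.le, Real.rpow_neg h1.le, div_eq_mul_inv]
    rcases le_total (‖u‖) 1 with h | h
    · refine (min_le_left _ _).trans ?_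
      rw [key]
      apply Real.one_le_rpow ?_ hrpos.le
      rw [le_div_iff₀ h1]
      linarith
    · refine (min_le_right _ _).trans ?_
      rw [key]
      have hu : (0:ℝ) < ‖u‖ := lt_of_lt_of_le one_pos h
      have h2 : ‖u‖ ^ (-r) = (1 / ‖u‖) ^ r := by
        rw [Real.rpow_neg hu.le, one_div, Real.inv_rpow hu.le]
      rw [h2]
      apply Real.rpow_le_rpow (by positivity) ?_ hrpos.le
      rw [div_le_div_iff₀ hu h1]
      linarith
  calc ∫⁻ u : EuclideanSpace ℝ (Fin d), ENNReal.ofReal (min 1 (‖u‖ ^ (-r)))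
      ≤ ∫⁻ u : EuclideanSpace ℝ (Fin d), ENNReal.ofReal (2 ^ r * (1 + ‖u‖) ^ (-r)) :=
        lintegral_mono fun u => ENNReal.ofReal_le_ofReal (hbd u)
    _ = ENNReal.ofReal (2 ^ r) * ∫⁻ u : EuclideanSpace ℝ (Fin d),
          ENNReal.ofReal ((1 + ‖u‖) ^ (-r)) := by
        simp_rw [ENNReal.ofReal_mul (by positivity : (0:ℝ) ≤ 2 ^ r)]
        rw [lintegral_const_mul' _ _ ENNReal.ofReal_ne_top]
    _ < ∞ := by
        apply ENNReal.mul_lt_top ENNReal.ofReal_lt_top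
        apply finite_integral_one_add_norm
        simp only [finrank_euclideanSpace_fin]
        linarith

lemma lintegral_Kf_ball {R : ℝ} (hR : 0 < R) :
    ∫⁻ u in ball (0 : EuclideanSpace ℝ (Fin d)) R, Kf d α u
      = ENNReal.ofReal (R ^ α) * ∫⁻ u in ball (0 : EuclideanSpace ℝ (Fin d)) 1, Kf d α u := by
  set E := EuclideanSpace ℝ (Fin d)
  have hmeasK : Measurable (Kf d α) := measurable_Kf
  have hmap : Measure.map (R • · : E → E) volume
      = ENNReal.ofReal |(R ^ Module.finrank ℝ E)⁻¹| • volume :=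
    Measure.map_addHaar_smul volume hR.ne'
  have hpre : (R • · : E → E) ⁻¹' (ball 0 R) = ball 0 1 := by
    ext v
    simp only [mem_preimage, mem_ball_zero_iff, norm_smul, Real.norm_eq_abs, abs_of_pos hR]
    constructor
    · intro h; nlinarith [norm_nonneg v]
    · intro h; nlinarith [norm_nonneg v]
  have hsmulK : ∀ v : E, Kf d α (R • v) = ENNReal.ofReal (R ^ (α - (d:ℝ))) * Kf d α v := by
    intro v
    simp only [Kf, norm_smul, Real.norm_eq_abs, abs_of_pos hR]
    rw [Real.mul_rpow hR.le (norm_nonneg v), ENNReal.ofReal_mul (by positivity)]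
  have hA : ∫⁻ u in ball (0:E) R, Kf d α u ∂(Measure.map (R • · : E → E) volume)
      = ENNReal.ofReal (R ^ (α - (d:ℝ))) * ∫⁻ u in ball (0:E) 1, Kf d α u := by
    rw [setLIntegral_map measurableSet_ball hmeasK (measurable_const_smul R), hpre]
    simp_rw [hsmulK]
    rw [lintegral_const_mul' _ _ ENNReal.ofReal_ne_top]
  rw [hmap] at hA
  rw [Measure.restrict_smul, lintegral_smul_measure] at hA
  have hfr : Module.finrank ℝ E = d := finrank_euclideanSpace_fin
  have hRd : (0:ℝ) < R ^ d := by positivity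
  have hcancel : ENNReal.ofReal (R ^ (d:ℕ)) * ENNReal.ofReal |(R ^ Module.finrank ℝ E)⁻¹| = 1 := by
    rw [hfr, abs_of_pos (by positivity), ← ENNReal.ofReal_mul (by positivity)]
    rw [mul_inv_cancel₀ hRd.ne']
    exact ENNReal.ofReal_one
  have hthis := congrArg (fun x => ENNReal.ofReal (R ^ (d:ℕ)) * x) hA
  simp only [smul_eq_mul, ← mul_assoc, hcancel, one_mul] at hthis
  rw [hthis, ← ENNReal.ofReal_mul (by positivity)]
  congr 2
  rw [← Real.rpow_natCast R d, ← Real.rpow_add hR]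
  ring_nf

lemma euclidean_nontrivial (hd : 1 ≤ d) : Nontrivial (EuclideanSpace ℝ (Fin d)) := by
  refine nontrivial_of_ne (EuclideanSpace.single ⟨0, by omega⟩ (1:ℝ)) 0 ?_
  intro h
  have h2 := congrArg (fun f => f ⟨0, by omega⟩) h
  simp only [EuclideanSpace.single_apply, if_pos rfl] at h2
  exact one_ne_zero (h2.trans rfl)

lemma lintegral_Kf_ball_one_lt_top (hd : 1 ≤ d) (hα : 0 < α) (hαd : α < (d:ℝ)) :
    ∫⁻ u in ball (0 : EuclideanSpace ℝ (Fin d)) 1, Kf d α u < ∞ := by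
  simp only [Kf]
  set E := EuclideanSpace ℝ (Fin d)
  haveI : Nontrivial E := euclidean_nontrivial hd
  set K : E → ℝ≥0∞ := fun u => ENNReal.ofReal (‖u‖ ^ (α - (d:ℝ))) with hK
  set B : ℝ≥0∞ := volume (ball (0:E) 1) with hB
  have hBlt : B < ∞ := measure_ball_lt_top
  set shell : ℕ → Set E := fun m => {u | (2⁻¹:ℝ)^(m+1) < ‖u‖ ∧ ‖u‖ ≤ (2⁻¹:ℝ)^m} with hshell
  have hshell_meas : ∀ m, MeasurableSet (shell m) := by
    intro m
    exact (measurableSet_lt measurable_const measurable_norm).inter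
      (measurableSet_le measurable_norm measurable_const)
  have hcover : ball (0:E) 1 ⊆ {0} ∪ ⋃ m, shell m := by
    intro u hu
    rcases eq_or_ne u 0 with h0 | h0
    · exact Or.inl (by simp [h0])
    · right
      have hupos : 0 < ‖u‖ := norm_pos_iff.mpr h0
      have hu1 : ‖u‖ < 1 := by simpa [mem_ball_zero_iff] using hu
      have hex : ∃ n : ℕ, (2⁻¹:ℝ)^n < ‖u‖ :=
        exists_pow_lt_of_lt_one hupos (by norm_num)
      have hfind : (2⁻¹:ℝ)^(Nat.find hex) < ‖u‖ := Nat.find_spec hex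
      have hn0 : Nat.find hex ≠ 0 := by
        intro h
        rw [h] at hfind
        simp at hfind
        linarith
      obtain ⟨m, hm⟩ : ∃ m, Nat.find hex = m + 1 :=
        ⟨Nat.find hex - 1, (Nat.succ_pred_eq_of_pos (Nat.pos_of_ne_zero hn0)).symm⟩
      rw [hm] at hfind
      refine mem_iUnion.mpr ⟨m, hfind, ?_⟩
      have hmin := Nat.find_min hex (m := m) (by omega)
      linarith [not_lt.mp hmin]
  have hshell_bound : ∀ m, ∫⁻ u in shell m, K u
      ≤ ENNReal.ofReal (((2⁻¹:ℝ)^(m+1))^(α-(d:ℝ))) * (ENNReal.ofReal (((2⁻¹:ℝ)^m)^(d:ℕ)) * B) := by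
    intro m
    have h1 : ∫⁻ u in shell m, K u
        ≤ ∫⁻ _ in shell m, ENNReal.ofReal (((2⁻¹:ℝ)^(m+1))^(α-(d:ℝ))) := by
      refine setLIntegral_mono' (hshell_meas m) ?_
      intro u hu
      exact ENNReal.ofReal_le_ofReal
        (Real.rpow_le_rpow_of_nonpos (by positivity) hu.1.le (by linarith))
    refine h1.trans ?_
    rw [setLIntegral_const]
    refine mul_le_mul_right ?_ _
    have hsub : shell m ⊆ closedBall (0:E) ((2⁻¹:ℝ)^m) := fun u hu => by
      simpa [mem_closedBall_zero_iff] using hu.2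
    refine (measure_mono hsub).trans ?_
    rw [Measure.addHaar_closedBall volume (0:E) (by positivity)]
    rw [finrank_euclideanSpace_fin]
  set a : ℝ := (2:ℝ) ^ (-α) with ha
  have ha0 : 0 ≤ a := by positivity
  have ha1 : a < 1 := Real.rpow_lt_one_of_one_lt_of_neg one_lt_two (by linarith)
  have hpow2 : ∀ k : ℕ, ((2⁻¹:ℝ))^k = (2:ℝ) ^ (-(k:ℝ)) := by
    intro k
    rw [Real.rpow_neg (by norm_num), Real.rpow_natCast, inv_pow]
  have key : ∀ m : ℕ, (((2⁻¹:ℝ)^(m+1))^(α-(d:ℝ))) * (((2⁻¹:ℝ)^m : ℝ)^(d:ℕ))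
      = (2:ℝ)^((d:ℝ)-α) * a^m := by
    intro m
    rw [hpow2, hpow2, ← Real.rpow_natCast (((2:ℝ))^(-(m:ℝ))) d,
      ← Real.rpow_mul (by norm_num), ← Real.rpow_mul (by norm_num),
      ← Real.rpow_add two_pos, ha, ← Real.rpow_natCast ((2:ℝ)^(-α)) m,
      ← Real.rpow_mul (by norm_num), ← Real.rpow_add two_pos]
    push_cast
    ring_nf
  calc ∫⁻ u in ball (0:E) 1, K u
      ≤ ∫⁻ u in ({0} ∪ ⋃ m, shell m : Set E), K u := lintegral_mono_set hcover
    _ ≤ (∫⁻ u in ({0} : Set E), K u) + ∫⁻ u in (⋃ m, shell m), K u := lintegral_union_le _ _ _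
    _ = ∫⁻ u in (⋃ m, shell m), K u := by
        rw [setLIntegral_measure_zero _ _ (measure_singleton 0), zero_add]
    _ ≤ ∑' m, ∫⁻ u in shell m, K u := lintegral_iUnion_le _ _
    _ ≤ ∑' m, ENNReal.ofReal ((2:ℝ)^((d:ℝ)-α)) * B * (ENNReal.ofReal a)^m := by
        refine ENNReal.tsum_le_tsum fun m => (hshell_bound m).trans (le_of_eq ?_)
        rw [← mul_assoc, ← ENNReal.ofReal_mul (by positivity), key m,
          ENNReal.ofReal_mul (by positivity), ← ENNReal.ofReal_pow ha0]
        ring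
    _ < ∞ := by
        rw [ENNReal.tsum_mul_left, ENNReal.tsum_geometric]
        refine ENNReal.mul_lt_top (ENNReal.mul_lt_top ENNReal.ofReal_lt_top hBlt) ?_
        rw [ENNReal.inv_lt_top]
        exact tsub_pos_of_lt (by exact_mod_cast ENNReal.ofReal_lt_one.mpr ha1)

lemma core_bound (hd : 3 ≤ d) (hα1 : 0 < α) (hα2 : α < 2)
    {S : EuclideanSpace ℝ (Fin d) → ℝ≥0∞}
    (hSr : ∀ (r : ℝ) (t : EuclideanSpace ℝ (Fin d)), 1 ≤ r → r ≤ ‖t‖ →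
      S t ≤ ENNReal.ofReal (r ^ (α - (d:ℝ))))
    (hSK : ∀ t, S t ≤ Kf d α t) :
    ∀ v : EuclideanSpace ℝ (Fin d), v ≠ 0 →
      ∫⁻ w, S (v - w) * Gf d α w
        ≤ (ENNReal.ofReal ((2:ℝ) ^ ((d:ℝ) - α))
            * ((∫⁻ u in ball (0 : EuclideanSpace ℝ (Fin d)) 1, Kf d α u)
                + ∫⁻ u : EuclideanSpace ℝ (Fin d), Gf d α u))
          * ENNReal.ofReal (min 1 (‖v‖ ^ (α - (d:ℝ)))) := by
  set CK1 : ℝ≥0∞ := ∫⁻ u in ball (0:EuclideanSpace ℝ (Fin d)) 1, Kf d α u with hCK1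
  set Cg : ℝ≥0∞ := ∫⁻ u : EuclideanSpace ℝ (Fin d), Gf d α u with hCg
  have hαd : α - (d:ℝ) ≤ 0 := by
    have : (3:ℝ) ≤ d := by exact_mod_cast hd
    linarith
  intro v hv
  have hvpos : 0 < ‖v‖ := norm_pos_iff.mpr hv
  -- bound on the ball part
  have hball : ∀ (R : ℝ) (g0 : ℝ≥0∞), 0 < R → g0 ≠ ∞ →
      (∀ w ∈ ball v R, Gf d α w ≤ g0) →
      ∫⁻ w in ball v R, S (v - w) * Gf d α w ≤ g0 * (ENNReal.ofReal (R ^ α) * CK1) := by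
    intro R g0 hR hg0 hg
    have step1 : ∫⁻ w in ball v R, S (v - w) * Gf d α w
        ≤ ∫⁻ w in ball v R, Kf d α (v - w) * g0 :=
      setLIntegral_mono' measurableSet_ball (fun w hw => mul_le_mul' (hSK _) (hg w hw))
    refine step1.trans ?_
    rw [lintegral_mul_const' _ _ hg0]
    rw [mul_comm]
    refine mul_le_mul_right (le_of_eq ?_) _
    have hpre : (fun w => v - w) ⁻¹' (ball (0:EuclideanSpace ℝ (Fin d)) R) = ball v R := by
      ext w
      simp only [mem_preimage, mem_ball, dist_eq_norm, sub_zero, norm_sub_rev w v]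
    calc ∫⁻ w in ball v R, Kf d α (v - w)
        = ∫⁻ w in (fun w => v - w) ⁻¹' (ball (0:EuclideanSpace ℝ (Fin d)) R), Kf d α (v - w) := by rw [hpre]
      _ = ∫⁻ u in ball (0:EuclideanSpace ℝ (Fin d)) R, Kf d α u :=
          (Measure.measurePreserving_sub_left volume v).setLIntegral_comp_preimage_emb
            (MeasurableEquiv.subLeft v).measurableEmbedding _ _
      _ = ENNReal.ofReal (R ^ α) * CK1 := lintegral_Kf_ball hR
  -- bound on the complement part
  have hcompl : ∀ (R : ℝ), 1 ≤ R →
      ∫⁻ w in (ball v R)ᶜ, S (v - w) * Gf d α w ≤ ENNReal.ofReal (R ^ (α - (d:ℝ))) * Cg := by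
    intro R hR
    have step1 : ∫⁻ w in (ball v R)ᶜ, S (v - w) * Gf d α w
        ≤ ∫⁻ w in (ball v R)ᶜ, ENNReal.ofReal (R ^ (α - (d:ℝ))) * Gf d α w := by
      refine setLIntegral_mono' measurableSet_ball.compl (fun w hw => ?_)
      refine mul_le_mul' (hSr R (v - w) hR ?_) le_rfl
      have := mem_ball.not.mp hw
      rw [dist_eq_norm, norm_sub_rev] at this
      linarith [not_lt.mp this]
    refine step1.trans ?_
    rw [lintegral_const_mul' _ _ ENNReal.ofReal_ne_top]
    exact mul_le_mul_right (setLIntegral_le_lintegral _ _) _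
  have hsplit : ∀ (R : ℝ), MeasurableSet (ball v R) →
      ∫⁻ w, S (v - w) * Gf d α w
        = (∫⁻ w in ball v R, S (v - w) * Gf d α w)
          + ∫⁻ w in (ball v R)ᶜ, S (v - w) * Gf d α w := by
    intro R hs
    exact (lintegral_add_compl _ hs).symm
  rcases le_or_gt ‖v‖ 2 with hv2 | hv2
  · -- small case
    have hmin : (2:ℝ) ^ (α - (d:ℝ)) ≤ min 1 (‖v‖ ^ (α - (d:ℝ))) := by
      refine le_min (Real.rpow_le_one_of_one_le_of_nonpos one_le_two hαd) ?_
      exact Real.rpow_le_rpow_of_nonpos hvpos hv2 hαd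
    have hG1 : ∀ w ∈ ball v 1, Gf d α w ≤ 1 := fun w _ => Gf_le_one w
    have h1 : ∫⁻ w, S (v - w) * Gf d α w ≤ CK1 + Cg := by
      rw [hsplit 1 measurableSet_ball]
      have hb := hball 1 1 one_pos ENNReal.one_ne_top hG1
      have hc := hcompl 1 le_rfl
      rw [Real.one_rpow, ENNReal.ofReal_one, one_mul, one_mul] at hb
      rw [Real.one_rpow, ENNReal.ofReal_one, one_mul] at hc
      exact add_le_add hb hc
    refine h1.trans ?_
    calc CK1 + Cg = (CK1 + Cg) * (ENNReal.ofReal ((2:ℝ)^((d:ℝ)-α)) * ENNReal.ofReal ((2:ℝ)^(α-(d:ℝ)))) := by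
          rw [← ENNReal.ofReal_mul (by positivity), ← Real.rpow_add two_pos]
          norm_num
      _ ≤ (ENNReal.ofReal ((2:ℝ)^((d:ℝ)-α)) * (CK1 + Cg)) * ENNReal.ofReal (min 1 (‖v‖ ^ (α - (d:ℝ)))) := by
          rw [← mul_assoc, mul_comm (CK1 + Cg)]
          exact mul_le_mul_right (ENNReal.ofReal_le_ofReal hmin) _
  · -- large case
    set R : ℝ := ‖v‖ / 2 with hRdef
    have hR1 : 1 ≤ R := by
      rw [hRdef]; linarith
    have hRpos : 0 < R := lt_of_lt_of_le one_pos hR1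
    have hG : ∀ w ∈ ball v R, Gf d α w ≤ ENNReal.ofReal (R ^ (-((d:ℝ) + α))) := by
      intro w hw
      refine Gf_le_of_le hRpos ?_ (by positivity)
      have h1 : ‖v - w‖ < R := by
        have := mem_ball.mp hw
        rw [dist_eq_norm, norm_sub_rev] at this
        exact this
      have h2 : ‖v‖ - ‖w‖ ≤ ‖v - w‖ := norm_sub_norm_le v w
      have : ‖v‖ = 2 * R := by rw [hRdef]; ring
      linarith
    have h1 : ∫⁻ w, S (v - w) * Gf d α w ≤ ENNReal.ofReal (R ^ (α - (d:ℝ))) * (CK1 + Cg) := by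
      rw [hsplit R measurableSet_ball]
      have hb := hball R (ENNReal.ofReal (R ^ (-((d:ℝ) + α)))) hRpos ENNReal.ofReal_ne_top hG
      have hc := hcompl R hR1
      have hb2 : ENNReal.ofReal (R ^ (-((d:ℝ) + α))) * (ENNReal.ofReal (R ^ α) * CK1)
          ≤ ENNReal.ofReal (R ^ (α - (d:ℝ))) * CK1 := by
        rw [← mul_assoc, ← ENNReal.ofReal_mul (by positivity), ← Real.rpow_add hRpos]
        refine mul_le_mul_left (ENNReal.ofReal_le_ofReal ?_) _
        refine Real.rpow_le_rpow_of_exponent_le hR1 (by linarith)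
      rw [mul_add]
      exact add_le_add (hb.trans hb2) hc
    refine h1.trans ?_
    have hRval : R ^ (α - (d:ℝ)) = (2:ℝ)^((d:ℝ)-α) * ‖v‖ ^ (α - (d:ℝ)) := by
      rw [hRdef, Real.div_rpow (norm_nonneg v) (by norm_num)]
      rw [div_eq_mul_inv, ← Real.rpow_neg (by norm_num), neg_sub]
      ring
    have hmin : min 1 (‖v‖ ^ (α - (d:ℝ))) = ‖v‖ ^ (α - (d:ℝ)) := by
      refine min_eq_right ?_
      exact Real.rpow_le_one_of_one_le_of_nonpos (by linarith) hαd
    rw [hRval, hmin, ENNReal.ofReal_mul (by positivity)]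
    exact le_of_eq (by ring)

lemma Gf_ne_top (u : EuclideanSpace ℝ (Fin d)) : Gf d α u ≠ ∞ := by
  rw [Gf]; exact ENNReal.ofReal_ne_top

end DblIntAux

/-- The convolution-type double integral bound used for Green function estimates:
`∫∫ min(1,|x-z|^{-(d+α)}) |z-w|^{α-d} min(1,|w-y|^{-(d+α)}) dz dw ≤ c |x-y|^{α-d}`. -/
theorem double_integral_bound (d : ℕ) (hd : 3 ≤ d) (α : ℝ) (hα : α ∈ Set.Ioo (0:ℝ) 2) :
    ∃ c : ℝ, 0 < c ∧ ∀ x y : EuclideanSpace ℝ (Fin d), x ≠ y →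
      (∫⁻ z : EuclideanSpace ℝ (Fin d), ∫⁻ w : EuclideanSpace ℝ (Fin d),
          ENNReal.ofReal
            (min 1 (‖x - z‖ ^ (-((d : ℝ) + α))) * ‖z - w‖ ^ (α - (d : ℝ)) *
              min 1 (‖w - y‖ ^ (-((d : ℝ) + α)))))
        ≤ ENNReal.ofReal (c * ‖x - y‖ ^ (α - (d : ℝ))) := by
  obtain ⟨hα1, hα2⟩ := hα
  haveI : Nontrivial (EuclideanSpace ℝ (Fin d)) := euclidean_nontrivial (by omega)
  have hαd : α < (d : ℝ) := by
    have h3 : (3:ℝ) ≤ d := by exact_mod_cast hd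
    linarith
  set C : ℝ≥0∞ := ENNReal.ofReal ((2:ℝ) ^ ((d:ℝ) - α))
      * ((∫⁻ u in ball (0 : EuclideanSpace ℝ (Fin d)) 1, Kf d α u)
          + ∫⁻ u : EuclideanSpace ℝ (Fin d), Gf d α u) with hC
  have hCne : C ≠ ∞ := by
    refine ENNReal.mul_ne_top ENNReal.ofReal_ne_top ?_
    exact (ENNReal.add_lt_top.mpr
      ⟨lintegral_Kf_ball_one_lt_top (by omega) hα1 hαd, lintegral_Gf_lt_top (by omega) hα1⟩).ne
  -- the two convolution bounds
  have coreK := core_bound hd hα1 hα2 (S := Kf d α)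
    (fun r t hr hrt => Kf_le_of_le (lt_of_lt_of_le one_pos hr) hrt (by linarith))
    (fun t => le_rfl)
  set M : EuclideanSpace ℝ (Fin d) → ℝ≥0∞ :=
    fun u => ENNReal.ofReal (min 1 (‖u‖ ^ (α - (d:ℝ)))) with hM
  have coreM := core_bound hd hα1 hα2 (S := M)
    (fun r t hr hrt => ENNReal.ofReal_le_ofReal <| (min_le_right _ _).trans
      (Real.rpow_le_rpow_of_nonpos (lt_of_lt_of_le one_pos hr) hrt (by linarith)))
    (fun t => ENNReal.ofReal_le_ofReal (min_le_right _ _))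
  refine ⟨(C * C).toReal + 1, by positivity, ?_⟩
  intro x y hxy
  have hxy0 : x - y ≠ 0 := sub_ne_zero.mpr hxy
  have hpt : ∀ z w : EuclideanSpace ℝ (Fin d),
      ENNReal.ofReal (min 1 (‖x - z‖ ^ (-((d : ℝ) + α))) * ‖z - w‖ ^ (α - (d : ℝ)) *
          min 1 (‖w - y‖ ^ (-((d : ℝ) + α))))
        = Gf d α (x - z) * (Kf d α (z - w) * Gf d α (w - y)) := by
    intro z w
    have h1 : (0:ℝ) ≤ min 1 (‖x - z‖ ^ (-((d : ℝ) + α))) :=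
      le_min zero_le_one (Real.rpow_nonneg (norm_nonneg _) _)
    have h2 : (0:ℝ) ≤ ‖z - w‖ ^ (α - (d : ℝ)) := Real.rpow_nonneg (norm_nonneg _) _
    rw [mul_assoc, ENNReal.ofReal_mul h1, ENNReal.ofReal_mul h2]
    rfl
  simp only [hpt]
  have hinner : ∀ z : EuclideanSpace ℝ (Fin d),
      ∫⁻ w, Gf d α (x - z) * (Kf d α (z - w) * Gf d α (w - y))
        = Gf d α (x - z) * ∫⁻ w, Kf d α ((z - y) - w) * Gf d α w := by
    intro z
    rw [lintegral_const_mul' _ _ (Gf_ne_top _)]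
    congr 1
    have h := lintegral_add_right_eq_self
      (μ := (volume : Measure (EuclideanSpace ℝ (Fin d))))
      (fun w => Kf d α (z - w) * Gf d α (w - y)) y
    rw [← h]
    congr 1 with w
    rw [show z - (w + y) = z - y - w by abel, add_sub_cancel_right]
  simp only [hinner]
  have hne : ∀ᵐ (z : EuclideanSpace ℝ (Fin d)), z ≠ y := by
    rw [ae_iff]
    have : {z : EuclideanSpace ℝ (Fin d) | ¬ z ≠ y} = {y} := by ext z; simp
    rw [this]
    exact measure_singleton y
  have step2 : ∫⁻ z, Gf d α (x - z) * ∫⁻ w, Kf d α ((z - y) - w) * Gf d α w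
      ≤ ∫⁻ z, C * (Gf d α (x - z) * M (z - y)) := by
    refine lintegral_mono_ae ?_
    filter_upwards [hne] with z hz
    rw [mul_left_comm]
    exact mul_le_mul_right (coreK (z - y) (sub_ne_zero.mpr hz)) _
  refine step2.trans ?_
  rw [lintegral_const_mul' _ _ hCne]
  have hshift2 : ∫⁻ z, Gf d α (x - z) * M (z - y)
      = ∫⁻ z, Gf d α ((x - y) - z) * M z := by
    have h := lintegral_add_right_eq_self
      (μ := (volume : Measure (EuclideanSpace ℝ (Fin d))))
      (fun z => Gf d α (x - z) * M (z - y)) y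
    rw [← h]
    congr 1 with z
    rw [show x - (z + y) = x - y - z by abel, add_sub_cancel_right]
  have hflip : ∫⁻ z, Gf d α ((x - y) - z) * M z
      = ∫⁻ z, M ((x - y) - z) * Gf d α z := by
    have h := (Measure.measurePreserving_sub_left
        (volume : Measure (EuclideanSpace ℝ (Fin d))) (x - y)).lintegral_comp_emb
      (MeasurableEquiv.subLeft (x - y)).measurableEmbedding
      (fun z => Gf d α ((x - y) - z) * M z)
    rw [← h]
    congr 1 with a
    rw [show x - y - (x - y - a) = a by abel, mul_comm]
  rw [hshift2, hflip]
  have hfin := coreM (x - y) hxy0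
  calc C * ∫⁻ z, M ((x - y) - z) * Gf d α z
      ≤ C * (C * ENNReal.ofReal (min 1 (‖x - y‖ ^ (α - (d:ℝ))))) := mul_le_mul_right hfin _
    _ ≤ C * C * ENNReal.ofReal (‖x - y‖ ^ (α - (d:ℝ))) := by
        rw [← mul_assoc]
        exact mul_le_mul_right (ENNReal.ofReal_le_ofReal (min_le_right _ _)) _
    _ ≤ ENNReal.ofReal ((C * C).toReal + 1) * ENNReal.ofReal (‖x - y‖ ^ (α - (d:ℝ))) := by
        refine mul_le_mul_left ?_ _
        have hCC : C * C ≠ ∞ := ENNReal.mul_ne_top hCne hCne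
        conv_lhs => rw [← ENNReal.ofReal_toReal hCC]
        exact ENNReal.ofReal_le_ofReal (by linarith)
    _ = ENNReal.ofReal (((C * C).toReal + 1) * ‖x - y‖ ^ (α - (d:ℝ))) := by
        rw [← ENNReal.ofReal_mul (by positivity)]
end
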